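/- arXiv:2105.00223 — 4 statements merged into one kernel-verified Lean document; each statement's English description precedes it below -/
import Mathlib

section
/- Let (Ỹ_u)_{u>0} be a locally stationary approximation of the sequence (Y_N)_{N∈ℕ} for some p ≥ 1. Then for every t > 0, (1/t)∫_0^t Y_N(ν) dν converges in L^p, as N → ∞, to the constant (1/t)∫_0^t E[Ỹ_u(0)] du. -/
open MeasureTheory Filter ENNReal
open scoped NNReal Topology BigOperators

noncomputable section

variable {Ω : Type*} [MeasurableSpace Ω]

/-- An ergodic measure-preserving flow `(T_t)_{t ∈ ℝ}` on a probability space. -/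
structure IsErgodicFlow (μ : Measure Ω) (T : ℝ → Ω → Ω) : Prop where
  measurable : ∀ t, Measurable (T t)
  measurePreserving : ∀ t, MeasurePreserving (T t) μ μ
  flow : ∀ s t ω, T s (T t ω) = T (s + t) ω
  id_zero : ∀ ω, T 0 ω = ω
  ergodic : ∀ A : Set Ω, MeasurableSet A → (∀ t, T t ⁻¹' A = A) → μ A = 0 ∨ μ A = 1

/-- A real-valued continuous-time process is stationary and ergodic:
`X(t, ω) = X(0, T_t ω)` for an ergodic measure-preserving flow `T`. -/
def IsStatErgodic (μ : Measure Ω) (X : ℝ → Ω → ℝ) : Prop :=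
  (∀ t, Measurable (X t)) ∧
    ∃ T : ℝ → Ω → Ω, IsErgodicFlow μ T ∧ ∀ t ω, X t ω = X 0 (T t ω)

/-- Stationarity of a continuous-time real-valued process: all finite-dimensional
distributions are invariant under time shifts. -/
def IsStationaryProc (μ : Measure Ω) (X : ℝ → Ω → ℝ) : Prop :=
  (∀ t, Measurable (X t)) ∧
    ∀ (s : ℝ) (n : ℕ) (t : Fin n → ℝ),
      μ.map (fun ω (i : Fin n) => X (t i) ω) = μ.map (fun ω (i : Fin n) => X (t i + s) ω)

/-- Stationarity of a `ℤ`-indexed real-valued sequence. -/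
def IsStationaryZ (μ : Measure Ω) (X : ℤ → Ω → ℝ) : Prop :=
  (∀ k, Measurable (X k)) ∧
    ∀ (s : ℤ) (n : ℕ) (t : Fin n → ℤ),
      μ.map (fun ω (i : Fin n) => X (t i) ω) = μ.map (fun ω (i : Fin n) => X (t i + s) ω)

/-- `Ỹ` is a locally stationary approximation of the sequence `Y` for `p ≥ 1`
(Definition 2.1 of the paper). -/
structure IsLSA (μ : Measure Ω) (Y : ℕ → ℝ → Ω → ℝ) (Ytil : ℝ → ℝ → Ω → ℝ)
    (p : ℝ) : Prop where
  one_le : 1 ≤ p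
  measY : ∀ N : ℕ, Measurable (Function.uncurry (Y N))
  measYtil : ∀ u : ℝ, Measurable (Function.uncurry (Ytil u))
  statErg : ∀ u : ℝ, 0 < u → IsStatErgodic μ (Ytil u)
  bddLp : ∃ B : ℝ≥0∞, B < ⊤ ∧ ∀ u : ℝ, 0 < u →
      eLpNorm (Ytil u 0) (ENNReal.ofReal p) μ ≤ B
  approx : ∃ C : ℝ, 0 < C ∧
    (∀ (u v t : ℝ), 0 < u → 0 < v →
      eLpNorm (fun ω => Ytil u t ω - Ytil v t ω) (ENNReal.ofReal p) μ ≤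
        ENNReal.ofReal (C * |u - v|)) ∧
    (∀ (N : ℕ) (t : ℝ), 1 ≤ N → 0 < t →
      eLpNorm (fun ω => Y N t ω - Ytil t ((N : ℝ) * t) ω) (ENNReal.ofReal p) μ ≤
        ENNReal.ofReal (C / (N : ℝ)))

/-- `θ` is a family of upper bounds for the θ-dependence coefficients of the
`E`-valued process `X`, for gaps `h` in the set `S`:  for all bounded measurable
`F`, bounded Lipschitz `G` and times `i₁ ≤ … ≤ i_v ≤ i_v + h ≤ j`,
`|Cov(F(X(i₁),…,X(i_v)), G(X(j)))| ≤ θ(h) ‖F‖_∞ Lip(G)`. -/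
def ThetaBoundOn {E : Type*} [NormedAddCommGroup E] [MeasurableSpace E]
    (μ : Measure Ω) (X : ℝ → Ω → E) (θ : ℝ → ℝ) (S : Set ℝ) : Prop :=
  ∀ (v : ℕ), 0 < v → ∀ (F : (Fin v → E) → ℝ) (G : E → ℝ) (CF : ℝ) (LG : ℝ≥0),
    Measurable F → (∀ x, |F x| ≤ CF) →
    Measurable G → LipschitzWith LG G → (∃ c, ∀ x, |G x| ≤ c) →
    ∀ (τ : Fin v → ℝ) (j h : ℝ), h ∈ S → Monotone τ → (∀ i, τ i + h ≤ j) →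
      |(∫ ω, F (fun i => X (τ i) ω) * G (X j ω) ∂μ) -
          (∫ ω, F (fun i => X (τ i) ω) ∂μ) * (∫ ω, G (X j ω) ∂μ)| ≤ θ h * CF * LG

/-- `θ` bounds the θ-dependence coefficients of `X` for all gaps `h ≥ 0`. -/
def ThetaBound {E : Type*} [NormedAddCommGroup E] [MeasurableSpace E]
    (μ : Measure Ω) (X : ℝ → Ω → E) (θ : ℝ → ℝ) : Prop :=
  ThetaBoundOn μ X θ (Set.Ici 0)

/-- The process `X` is θ-weakly dependent: its θ-coefficients tend to `0`. -/
def ThetaWeaklyDependent {E : Type*} [NormedAddCommGroup E] [MeasurableSpace E]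
    (μ : Measure Ω) (X : ℝ → Ω → E) : Prop :=
  ∃ θ : ℝ → ℝ, ThetaBound μ X θ ∧ Tendsto θ atTop (𝓝 0)

/-- θ-dependence coefficient bounds for a `ℤ`-indexed real-valued sequence. -/
def ThetaBoundZ (μ : Measure Ω) (X : ℤ → Ω → ℝ) (θ : ℕ → ℝ) : Prop :=
  ∀ (v : ℕ), 0 < v → ∀ (F : (Fin v → ℝ) → ℝ) (G : ℝ → ℝ) (CF : ℝ) (LG : ℝ≥0),
    Measurable F → (∀ x, |F x| ≤ CF) →
    Measurable G → LipschitzWith LG G → (∃ c, ∀ x, |G x| ≤ c) →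
    ∀ (τ : Fin v → ℤ) (j : ℤ) (h : ℕ), Monotone τ → (∀ i, τ i + (h : ℤ) ≤ j) →
      |(∫ ω, F (fun i => X (τ i) ω) * G (X j ω) ∂μ) -
          (∫ ω, F (fun i => X (τ i) ω) ∂μ) * (∫ ω, G (X j ω) ∂μ)| ≤ θ h * CF * LG

/-- A localizing kernel: bounded, of bounded variation, compact support `[-1,1]`
and total integral one. -/
structure IsLocalizingKernel (K : ℝ → ℝ) : Prop where
  bdd : ∃ B : ℝ, ∀ x, |K x| ≤ B
  bv : BoundedVariationOn K Set.univ
  supp : ∀ x : ℝ, x ∉ Set.Icc (-1 : ℝ) 1 → K x = 0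
  integral_one : ∫ x : ℝ, K x = 1

/-- The rectangular kernel `K_rect = (1/2)·1_{[-1,1]}`. -/
def Krect : ℝ → ℝ := fun x => if x ∈ Set.Icc (-1 : ℝ) 1 then 1 / 2 else 0

/-- The observation scheme of Assumption 2.2: grid sizes `δ_N ↓ 0`, bandwidths
`b_N ↓ 0` and `b_N / δ_N → ∞`. -/
structure ObsScheme (δ b : ℕ → ℝ) : Prop where
  δpos : ∀ N, 0 < δ N
  δanti : Antitone δ
  δto0 : Tendsto δ atTop (𝓝 0)
  bpos : ∀ N, 0 < b N
  banti : Antitone b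
  bto0 : Tendsto b atTop (𝓝 0)
  ratio_top : Tendsto (fun N => b N / δ N) atTop atTop

/-- The class `𝓛_{k+1}(M, C)` of finite-memory transformations. -/
def MemL (k : ℕ) (M C : ℝ) (g : (Fin (k + 1) → ℝ) → ℝ) : Prop :=
  Measurable g ∧ ∀ x y : Fin (k + 1) → ℝ,
    |g x - g y| ≤ C * (∑ i, |x i - y i|) *
      (1 + (∑ i, |x i|) ^ M + (∑ i, |y i|) ^ M)

/-- The class `𝓛_∞^{p,q}(α)` of infinite-memory transformations. -/
def MemLinf (μ : Measure Ω) (p q : ℝ) (α : ℕ → ℝ) (g : (ℕ → ℝ) → ℝ) : Prop :=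
  Measurable g ∧ (∀ k, 0 ≤ α k) ∧ Summable α ∧
    ∃ f : ℝ≥0∞ → ℝ≥0∞,
      ∀ X Y : ℕ → Ω → ℝ,
        (∀ k, Measurable (X k)) → (∀ k, Measurable (Y k)) →
        (⨆ k, max (eLpNorm (X k) (ENNReal.ofReal q) μ)
            (eLpNorm (Y k) (ENNReal.ofReal q) μ)) < ⊤ →
        eLpNorm (fun ω => g (fun k => X k ω) - g (fun k => Y k ω))
            (ENNReal.ofReal p) μ ≤
          f (⨆ k, max (eLpNorm (X k) (ENNReal.ofReal q) μ)
              (eLpNorm (Y k) (ENNReal.ofReal q) μ)) *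
            ∑' k : ℕ, ENNReal.ofReal (α k) *
              eLpNorm (fun ω => X k ω - Y k ω) (ENNReal.ofReal q) μ

end
section AuxLemmas
variable {Ω : Type*} [MeasurableSpace Ω] {μ : Measure Ω}



/-- truncation -/
def rtrunc (M x : ℝ) : ℝ := max (min x M) (-M)

lemma rtrunc_continuous (M : ℝ) : Continuous fun x => rtrunc M x := by
  unfold rtrunc; fun_prop

lemma abs_rtrunc_le {M : ℝ} (hM : 0 ≤ M) (x : ℝ) : |rtrunc M x| ≤ M := by
  rw [abs_le]; unfold rtrunc
  constructor
  · exact le_max_right _ _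
  · exact max_le (min_le_right _ _) (by linarith)

lemma abs_rtrunc_le_abs {M : ℝ} (hM : 0 ≤ M) (x : ℝ) : |rtrunc M x| ≤ |x| := by
  unfold rtrunc
  rcases le_total x 0 with hx | hx
  · rw [min_eq_left (by linarith)]
    rw [abs_of_nonpos hx, abs_of_nonpos (by simp [hx]; linarith : max x (-M) ≤ 0)]
    simp
  · rw [max_eq_left (le_trans (by linarith) (le_min hx hM))]
    rw [abs_of_nonneg hx, abs_of_nonneg (le_min hx hM)]
    exact min_le_left _ _

lemma abs_sub_rtrunc_le_abs {M : ℝ} (hM : 0 ≤ M) (x : ℝ) : |x - rtrunc M x| ≤ |x| := by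
  unfold rtrunc
  rcases le_total x 0 with hx | hx
  · rw [min_eq_left (by linarith)]
    have h1 : x ≤ max x (-M) := le_max_left _ _
    have h2 : max x (-M) ≤ 0 := max_le hx (by linarith)
    rw [abs_of_nonpos (by linarith), abs_of_nonpos hx]; linarith
  · have hm : 0 ≤ min x M := le_min hx hM
    rw [max_eq_left (le_trans (by linarith) hm)]
    have : min x M ≤ x := min_le_left _ _
    rw [abs_of_nonneg (by linarith), abs_of_nonneg hx]; linarith

lemma rtrunc_eq_self {M x : ℝ} (h : |x| ≤ M) : rtrunc M x = x := by
  rw [abs_le] at h; unfold rtrunc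
  rw [min_eq_left h.2, max_eq_left h.1]

/-- section measurability -/
lemma meas_sec_left {f : ℝ → Ω → ℝ} (hf : Measurable (Function.uncurry f)) (r : ℝ) :
    Measurable (f r) :=
  hf.comp (measurable_const.prodMk measurable_id)

lemma meas_sec_right {f : ℝ → Ω → ℝ} (hf : Measurable (Function.uncurry f)) (ω : Ω) :
    Measurable fun r => f r ω :=
  hf.comp (measurable_id.prodMk measurable_const)

/-- measurability of parametric interval integrals -/
lemma meas_param_integral {f : ℝ → Ω → ℝ} (hf : Measurable (Function.uncurry f)) (a b : ℝ) :
    Measurable fun ω => ∫ ν in a..b, f ν ω := by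
  have h : ∀ c d : ℝ, Measurable fun ω => ∫ ν in Set.Ioc c d, f ν ω := by
    intro c d
    have hsm : StronglyMeasurable fun q : Ω × ℝ => f q.2 q.1 :=
      (hf.comp measurable_swap).stronglyMeasurable
    exact (hsm.integral_prod_right' (ν := volume.restrict (Set.Ioc c d))).measurable
  simp only [intervalIntegral]
  exact (h a b).sub (h b a)

/-- bounded measurable implies interval integrable -/
lemma intervalIntegrable_of_bounded {g : ℝ → ℝ} (hg : Measurable g) {M : ℝ}
    (h : ∀ x, |g x| ≤ M) (a b : ℝ) : IntervalIntegrable g volume a b := by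
  refine intervalIntegrable_iff.2 ?_
  haveI : IsFiniteMeasure (volume.restrict (Set.uIoc a b)) :=
    ⟨by rw [Measure.restrict_apply_univ]; exact measure_Ioc_lt_top⟩
  refine Integrable.mono' (integrable_const M) hg.aestronglyMeasurable.restrict ?_
  exact Eventually.of_forall fun x => by simpa using h x

/-- power mean inequality on a probability space, in ℝ≥0∞ -/
lemma lintegral_pow_mean {α : Type*} [MeasurableSpace α] {ν : Measure α}
    [IsProbabilityMeasure ν] {h : α → ℝ≥0∞} (hh : AEMeasurable h ν) {p : ℝ} (hp : 1 ≤ p) :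
    (∫⁻ x, h x ∂ν) ^ p ≤ ∫⁻ x, h x ^ p ∂ν := by
  rcases eq_or_lt_of_le hp with hp1 | hp1
  · simp [← hp1]
  · have hpq : p.HolderConjugate (p / (p - 1)) := Real.HolderConjugate.conjExponent hp1
    have := ENNReal.lintegral_mul_le_Lp_mul_Lq ν hpq hh aemeasurable_const (g := fun _ => 1)
    simp only [mul_one, ENNReal.one_rpow, lintegral_const, measure_univ, one_mul] at this
    have h2 : (∫⁻ x, h x ∂ν) ≤ (∫⁻ x, h x ^ p ∂ν) ^ (1 / p) := by simpa using this
    calc (∫⁻ x, h x ∂ν) ^ p ≤ ((∫⁻ x, h x ^ p ∂ν) ^ (1 / p)) ^ p :=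
          ENNReal.rpow_le_rpow h2 (by linarith)
    _ = ∫⁻ x, h x ^ p ∂ν := by
          rw [← ENNReal.rpow_mul, one_div, inv_mul_cancel₀ (by linarith), ENNReal.rpow_one]


/-- Jensen / Minkowski-type bound: the Lᵖ norm of an average is bounded by the sup of
the Lᵖ norms. -/
lemma avg_eLpNorm_le [IsProbabilityMeasure μ] {p : ℝ} (hp : 1 ≤ p) {f : ℝ → Ω → ℝ}
    (hf : Measurable (Function.uncurry f)) {a b : ℝ} (hab : a < b) {ε : ℝ≥0∞}
    (hε : ∀ ν ∈ Set.Ioc a b, eLpNorm (f ν) (ENNReal.ofReal p) μ ≤ ε) :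
    eLpNorm (fun ω => (b - a)⁻¹ * ∫ ν in a..b, f ν ω) (ENNReal.ofReal p) μ ≤ ε := by
  have hba : 0 < b - a := by linarith
  set ρ : Measure ℝ := (ENNReal.ofReal (b - a))⁻¹ • volume.restrict (Set.Ioc a b) with hρ
  haveI : IsProbabilityMeasure ρ := by
    constructor
    rw [hρ]
    simp only [Measure.smul_apply, Measure.restrict_apply_univ, Real.volume_Ioc, smul_eq_mul]
    rw [ENNReal.inv_mul_cancel (ENNReal.ofReal_pos.2 hba).ne' ENNReal.ofReal_ne_top]
  have hp0 : 0 < p := by linarith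
  have hq0 : ENNReal.ofReal p ≠ 0 := by simp [hp0]
  have hqt : ENNReal.ofReal p ≠ ⊤ := by simp
  have hqr : (ENNReal.ofReal p).toReal = p := ENNReal.toReal_ofReal hp0.le
  -- pointwise bound
  have key : ∀ ω, (‖(b - a)⁻¹ * ∫ ν in a..b, f ν ω‖₊ : ℝ≥0∞) ≤ ∫⁻ ν, ‖f ν ω‖₊ ∂ρ := by
    intro ω
    rw [hρ]
    rw [lintegral_smul_measure]
    have h1 : (‖(b - a)⁻¹ * ∫ ν in a..b, f ν ω‖₊ : ℝ≥0∞) =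
        (ENNReal.ofReal (b - a))⁻¹ * ‖∫ ν in a..b, f ν ω‖₊ := by
      rw [nnnorm_mul, ENNReal.coe_mul]
      congr 1
      rw [← ENNReal.ofReal_inv_of_pos hba]
      rw [← enorm_eq_nnnorm, Real.enorm_eq_ofReal (by positivity)]
    rw [h1, smul_eq_mul]
    gcongr
    rw [intervalIntegral.integral_of_le hab.le]
    exact enorm_integral_le_lintegral_enorm _
  -- main chain
  rw [eLpNorm_eq_lintegral_rpow_enorm_toReal hq0 hqt, hqr]
  have hswap : ∫⁻ ω, ∫⁻ ν, (‖f ν ω‖₊ : ℝ≥0∞) ^ p ∂ρ ∂μ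
      = ∫⁻ ν, ∫⁻ ω, (‖f ν ω‖₊ : ℝ≥0∞) ^ p ∂μ ∂ρ := by
    refine lintegral_lintegral_swap ?_
    apply Measurable.aemeasurable
    have : Measurable fun q : Ω × ℝ => f q.2 q.1 := hf.comp measurable_swap
    exact (this.nnnorm.coe_nnreal_ennreal.pow_const p)
  have step1 : ∫⁻ ω, (‖(b - a)⁻¹ * ∫ ν in a..b, f ν ω‖₊ : ℝ≥0∞) ^ p ∂μ
      ≤ ∫⁻ ω, ∫⁻ ν, (‖f ν ω‖₊ : ℝ≥0∞) ^ p ∂ρ ∂μ := by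
    refine lintegral_mono fun ω => ?_
    calc (‖(b - a)⁻¹ * ∫ ν in a..b, f ν ω‖₊ : ℝ≥0∞) ^ p
        ≤ (∫⁻ ν, ‖f ν ω‖₊ ∂ρ) ^ p := ENNReal.rpow_le_rpow (key ω) hp0.le
      _ ≤ ∫⁻ ν, (‖f ν ω‖₊ : ℝ≥0∞) ^ p ∂ρ := by
          refine lintegral_pow_mean ?_ hp
          exact ((meas_sec_right hf ω).nnnorm.coe_nnreal_ennreal).aemeasurable
  have step2 : ∫⁻ ν, ∫⁻ ω, (‖f ν ω‖₊ : ℝ≥0∞) ^ p ∂μ ∂ρ ≤ ε ^ p := by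
    have hae : ∀ᵐ ν ∂ρ, ν ∈ Set.Ioc a b := by
      rw [hρ]
      exact Measure.ae_smul_measure (ae_restrict_mem measurableSet_Ioc) _
    calc ∫⁻ ν, ∫⁻ ω, (‖f ν ω‖₊ : ℝ≥0∞) ^ p ∂μ ∂ρ
        ≤ ∫⁻ _, ε ^ p ∂ρ := by
          refine lintegral_mono_ae (hae.mono fun ν hν => ?_)
          have h1 : ∫⁻ ω, (‖f ν ω‖₊ : ℝ≥0∞) ^ p ∂μ = (eLpNorm (f ν) (ENNReal.ofReal p) μ) ^ p := by
            rw [eLpNorm_eq_lintegral_rpow_enorm_toReal hq0 hqt, hqr, ← ENNReal.rpow_mul,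
              one_div, inv_mul_cancel₀ hp0.ne', ENNReal.rpow_one]
            rfl
          rw [h1]
          exact ENNReal.rpow_le_rpow (hε ν hν) hp0.le
      _ = ε ^ p := by simp
  calc (∫⁻ ω, (‖(b - a)⁻¹ * ∫ ν in a..b, f ν ω‖₊ : ℝ≥0∞) ^ p ∂μ) ^ (1 / p)
      ≤ (ε ^ p) ^ (1 / p) := by
        refine ENNReal.rpow_le_rpow ?_ (by positivity)
        exact le_trans step1 (le_trans (le_of_eq hswap) step2)
    _ = ε := by rw [← ENNReal.rpow_mul, mul_one_div, div_self hp0.ne', ENNReal.rpow_one]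

/-- a.e. integrability in the time variable from uniform Lᵖ bounds (Tonelli). -/
lemma ae_integrableOn_of_bound [IsProbabilityMeasure μ] {f : ℝ → Ω → ℝ}
    (hf : Measurable (Function.uncurry f)) {a b : ℝ} {p : ℝ} (hp : 1 ≤ p)
    {B : ℝ≥0∞} (hB : B < ⊤) (hbd : ∀ ν ∈ Set.Ioc a b, eLpNorm (f ν) (ENNReal.ofReal p) μ ≤ B) :
    ∀ᵐ ω ∂μ, IntegrableOn (fun ν => f ν ω) (Set.Ioc a b) volume := by
  have hq1 : (1 : ℝ≥0∞) ≤ ENNReal.ofReal p := by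
    rw [ENNReal.one_le_ofReal]; exact hp
  have hmeas : Measurable fun q : Ω × ℝ => (‖f q.2 q.1‖₊ : ℝ≥0∞) :=
    (hf.comp measurable_swap).nnnorm.coe_nnreal_ennreal
  have hfin : ∫⁻ ω, ∫⁻ ν in Set.Ioc a b, (‖f ν ω‖₊ : ℝ≥0∞) ∂volume ∂μ < ⊤ := by
    have hswap : ∫⁻ ω, ∫⁻ ν in Set.Ioc a b, (‖f ν ω‖₊ : ℝ≥0∞) ∂volume ∂μ
        = ∫⁻ ν in Set.Ioc a b, ∫⁻ ω, (‖f ν ω‖₊ : ℝ≥0∞) ∂μ ∂volume :=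
      lintegral_lintegral_swap hmeas.aemeasurable
    rw [hswap]
    have hbd1 : ∀ ν ∈ Set.Ioc a b, ∫⁻ ω, (‖f ν ω‖₊ : ℝ≥0∞) ∂μ ≤ B := by
      intro ν hν
      have h1 : ∫⁻ ω, (‖f ν ω‖₊ : ℝ≥0∞) ∂μ = eLpNorm (f ν) 1 μ := by
        rw [eLpNorm_one_eq_lintegral_enorm]
        rfl
      rw [h1]
      exact le_trans (eLpNorm_le_eLpNorm_of_exponent_le hq1
        (meas_sec_left hf ν).aestronglyMeasurable) (hbd ν hν)
    calc ∫⁻ ν in Set.Ioc a b, ∫⁻ ω, (‖f ν ω‖₊ : ℝ≥0∞) ∂μ ∂volume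
        ≤ ∫⁻ _ in Set.Ioc a b, B ∂volume := by
          refine lintegral_mono_ae ((ae_restrict_mem measurableSet_Ioc).mono fun ν hν => hbd1 ν hν)
      _ = B * volume (Set.Ioc a b) := by simp [mul_comm]
      _ < ⊤ := ENNReal.mul_lt_top hB (by simp [Real.volume_Ioc])
  have hmeas2 : Measurable fun ω => ∫⁻ ν in Set.Ioc a b, (‖f ν ω‖₊ : ℝ≥0∞) ∂volume :=
    Measurable.lintegral_prod_right hmeas
  have hae : ∀ᵐ ω ∂μ, ∫⁻ ν in Set.Ioc a b, (‖f ν ω‖₊ : ℝ≥0∞) ∂volume < ⊤ :=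
    ae_lt_top hmeas2 hfin.ne
  refine hae.mono fun ω hω => ?_
  refine ⟨(meas_sec_right hf ω).aestronglyMeasurable.restrict, ?_⟩
  exact hω

/-- truncation error is small in Lᵖ -/
lemma trunc_err_small {f : Ω → ℝ} (hf : Measurable f) {p : ℝ} (hp : 1 ≤ p)
    (hfin : eLpNorm f (ENNReal.ofReal p) μ < ⊤) {η : ℝ≥0∞} (hη : 0 < η) :
    ∃ M : ℝ, 0 ≤ M ∧
      eLpNorm (fun ω => f ω - rtrunc M (f ω)) (ENNReal.ofReal p) μ ≤ η := by
  have hp0 : 0 < p := by linarith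
  have hq0 : ENNReal.ofReal p ≠ 0 := by simp [hp0]
  have hqt : ENNReal.ofReal p ≠ ⊤ := by simp
  have hqr : (ENNReal.ofReal p).toReal = p := ENNReal.toReal_ofReal hp0.le
  have hdom : ∫⁻ ω, (‖f ω‖₊ : ℝ≥0∞) ^ p ∂μ ≠ ⊤ := by
    rw [eLpNorm_eq_lintegral_rpow_enorm_toReal hq0 hqt, hqr] at hfin
    simp only [enorm_eq_nnnorm] at hfin
    intro hcon
    rw [hcon] at hfin
    rw [ENNReal.top_rpow_of_pos (by positivity)] at hfin
    exact absurd hfin (by simp)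
  have hFmeas : ∀ j : ℕ, Measurable fun ω => (‖f ω - rtrunc (j:ℝ) (f ω)‖₊ : ℝ≥0∞) ^ p := by
    intro j
    exact ((hf.sub ((rtrunc_continuous (j:ℝ)).measurable.comp hf)).nnnorm.coe_nnreal_ennreal).pow_const p
  have hbound : ∀ j : ℕ, (fun ω => (‖f ω - rtrunc (j:ℝ) (f ω)‖₊ : ℝ≥0∞) ^ p)
      ≤ᵐ[μ] fun ω => (‖f ω‖₊ : ℝ≥0∞) ^ p := by
    intro j
    refine Eventually.of_forall fun ω => ?_
    refine ENNReal.rpow_le_rpow ?_ hp0.le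
    rw [ENNReal.coe_le_coe]
    have := abs_sub_rtrunc_le_abs (M := (j:ℝ)) (by positivity) (f ω)
    rw [← NNReal.coe_le_coe, coe_nnnorm, coe_nnnorm, Real.norm_eq_abs, Real.norm_eq_abs]
    exact this
  have hlim : ∀ᵐ ω ∂μ, Tendsto (fun j : ℕ => (‖f ω - rtrunc (j:ℝ) (f ω)‖₊ : ℝ≥0∞) ^ p)
      atTop (𝓝 0) := by
    refine Eventually.of_forall fun ω => ?_
    have : ∀ᶠ j : ℕ in atTop, (‖f ω - rtrunc (j:ℝ) (f ω)‖₊ : ℝ≥0∞) ^ p = 0 := by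
      filter_upwards [eventually_ge_atTop ⌈|f ω|⌉₊] with j hj
      have : rtrunc (j:ℝ) (f ω) = f ω :=
        rtrunc_eq_self (le_trans (Nat.le_ceil _) (by exact_mod_cast hj))
      simp [this, ENNReal.zero_rpow_of_pos hp0]
    exact Tendsto.congr' (this.mono fun j hj => hj.symm) tendsto_const_nhds
  have htd : Tendsto (fun j : ℕ => ∫⁻ ω, (‖f ω - rtrunc (j:ℝ) (f ω)‖₊ : ℝ≥0∞) ^ p ∂μ)
      atTop (𝓝 0) := by
    have := tendsto_lintegral_of_dominated_convergence _ hFmeas hbound hdom hlim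
    simpa using this
  have htd2 : Tendsto (fun j : ℕ =>
      eLpNorm (fun ω => f ω - rtrunc (j:ℝ) (f ω)) (ENNReal.ofReal p) μ) atTop (𝓝 0) := by
    have hcont : Tendsto (fun x : ℝ≥0∞ => x ^ (1/p)) (𝓝 0) (𝓝 0) := by
      have := (ENNReal.continuous_rpow_const (y := 1/p)).tendsto 0
      rwa [ENNReal.zero_rpow_of_pos (by positivity)] at this
    have := hcont.comp htd
    refine Tendsto.congr (fun j => ?_) this
    rw [Function.comp_apply, eLpNorm_eq_lintegral_rpow_enorm_toReal hq0 hqt, hqr]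
    rfl
  obtain ⟨j, hj⟩ := (ENNReal.tendsto_nhds_zero.1 htd2 η hη).exists
  exact ⟨(j:ℝ), by positivity, hj⟩

/-- L² convergence plus a uniform bound controls the Lᵖ norm. -/
lemma eLpNorm_le_of_bdd_L2 [IsProbabilityMeasure μ] {h : Ω → ℝ}
    (hm : AEStronglyMeasurable h μ) {D : ℝ} (hD : 0 ≤ D) (hbd : ∀ᵐ ω ∂μ, |h ω| ≤ D)
    {p : ℝ} (hp : 1 ≤ p) :
    eLpNorm h (ENNReal.ofReal p) μ ≤
      ENNReal.ofReal D ^ ((p-1)/p) * (eLpNorm h 2 μ) ^ (1/p) := by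
  have hp0 : 0 < p := by linarith
  have hq0 : ENNReal.ofReal p ≠ 0 := by simp [hp0]
  have hqt : ENNReal.ofReal p ≠ ⊤ := by simp
  have hqr : (ENNReal.ofReal p).toReal = p := ENNReal.toReal_ofReal hp0.le
  rw [eLpNorm_eq_lintegral_rpow_enorm_toReal hq0 hqt, hqr]
  have key : ∫⁻ ω, (‖h ω‖₊ : ℝ≥0∞) ^ p ∂μ
      ≤ ENNReal.ofReal D ^ (p-1) * ∫⁻ ω, (‖h ω‖₊ : ℝ≥0∞) ∂μ := by
    have hDfin : ENNReal.ofReal D ^ (p-1) ≠ ⊤ :=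
      (ENNReal.rpow_lt_top_of_nonneg (by linarith) ENNReal.ofReal_ne_top).ne
    rw [← lintegral_const_mul' _ _ hDfin]
    refine lintegral_mono_ae (hbd.mono fun ω hω => ?_)
    rcases eq_or_ne (‖h ω‖₊ : ℝ≥0∞) 0 with h0 | h0
    · rw [h0, ENNReal.zero_rpow_of_pos hp0]
      simp
    · have hsplit : (‖h ω‖₊ : ℝ≥0∞) ^ p = (‖h ω‖₊ : ℝ≥0∞) ^ (p-1) * (‖h ω‖₊ : ℝ≥0∞) := by
        calc (‖h ω‖₊ : ℝ≥0∞) ^ p = (‖h ω‖₊ : ℝ≥0∞) ^ ((p-1) + 1) := by ring_nf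
          _ = (‖h ω‖₊ : ℝ≥0∞) ^ (p-1) * (‖h ω‖₊ : ℝ≥0∞) ^ (1:ℝ) :=
              ENNReal.rpow_add _ _ h0 (by simp)
          _ = (‖h ω‖₊ : ℝ≥0∞) ^ (p-1) * (‖h ω‖₊ : ℝ≥0∞) := by rw [ENNReal.rpow_one]
      rw [hsplit]
      have hbase : (‖h ω‖₊ : ℝ≥0∞) ≤ ENNReal.ofReal D := by
        rw [← enorm_eq_nnnorm, ← ofReal_norm]
        exact ENNReal.ofReal_le_ofReal (by rwa [Real.norm_eq_abs])
      gcongr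
  calc (∫⁻ ω, (‖h ω‖₊ : ℝ≥0∞) ^ p ∂μ) ^ (1/p)
      ≤ (ENNReal.ofReal D ^ (p-1) * ∫⁻ ω, (‖h ω‖₊ : ℝ≥0∞) ∂μ) ^ (1/p) :=
        ENNReal.rpow_le_rpow key (by positivity)
    _ = ENNReal.ofReal D ^ ((p-1)/p) * (∫⁻ ω, (‖h ω‖₊ : ℝ≥0∞) ∂μ) ^ (1/p) := by
        rw [ENNReal.mul_rpow_of_nonneg _ _ (by positivity), ← ENNReal.rpow_mul]
        ring_nf
    _ ≤ ENNReal.ofReal D ^ ((p-1)/p) * (eLpNorm h 2 μ) ^ (1/p) := by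
        gcongr
        calc ∫⁻ ω, (‖h ω‖₊ : ℝ≥0∞) ∂μ = eLpNorm h 1 μ := (by rw [eLpNorm_one_eq_lintegral_enorm]; rfl)
          _ ≤ eLpNorm h 2 μ := eLpNorm_le_eLpNorm_of_exponent_le one_le_two hm

/-- limsup comparison in ℝ≥0∞ with a vanishing error term -/
lemma limsup_le_limsup_of_error {u v e : ℕ → ℝ≥0∞} (h : ∀ k, u k ≤ v k + e k)
    (he : Tendsto e atTop (𝓝 0)) :
    Filter.limsup u Filter.atTop ≤ Filter.limsup v Filter.atTop := by
  refine ENNReal.le_of_forall_pos_le_add fun ε hε _ => ?_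
  have hev : ∀ᶠ k in atTop, e k ≤ (ε : ℝ≥0∞) :=
    ENNReal.tendsto_nhds_zero.mp he ε (by exact_mod_cast hε)
  have hle : ∀ᶠ k in atTop, u k ≤ v k + (ε : ℝ≥0∞) := by
    filter_upwards [hev] with k hk
    exact (h k).trans (by gcongr)
  calc Filter.limsup u Filter.atTop ≤ Filter.limsup (fun k => v k + (ε : ℝ≥0∞)) Filter.atTop :=
        limsup_le_limsup hle
    _ = Filter.limsup v Filter.atTop + (ε : ℝ≥0∞) :=
        limsup_add_const atTop v (ε : ℝ≥0∞)
          ⟨⊤, by simp [Filter.eventually_map]⟩ ⟨⊥, fun a _ => bot_le⟩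

/-- iterates of the time-one map -/
lemma flow_iterate {T : ℝ → Ω → Ω} (hT : IsErgodicFlow μ T) :
    ∀ (k : ℕ) (ω : Ω), (T 1)^[k] ω = T (k:ℝ) ω := by
  intro k
  induction k with
  | zero => intro ω; simp [hT.id_zero]
  | succ k ih =>
    intro ω
    rw [Function.iterate_succ_apply, ih (T 1 ω), hT.flow]
    push_cast
    ring_nf

/-- integrals are invariant under a measure preserving map -/
lemma integral_comp_mp {ψ : Ω → ℝ} (hψ : Measurable ψ) {τ : Ω → Ω} (hτm : Measurable τ)
    (hτ : MeasurePreserving τ μ μ) : ∫ ω, ψ (τ ω) ∂μ = ∫ ω, ψ ω ∂μ := by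
  have h := integral_map (φ := τ) hτm.aemeasurable (f := ψ)
    (by rw [hτ.map_eq]; exact hψ.aestronglyMeasurable)
  rw [hτ.map_eq] at h
  exact h.symm

/-- **Core lemma**: L² law of large numbers along integer times for a bounded
stationary-ergodic process, via the von Neumann mean ergodic theorem. -/
lemma bounded_lln_int [IsProbabilityMeasure μ] {X : ℝ → Ω → ℝ}
    (hXu : Measurable (Function.uncurry X))
    {T : ℝ → Ω → Ω} (hT : IsErgodicFlow μ T) (hXT : ∀ t ω, X t ω = X 0 (T t ω))
    {M : ℝ} (hM : 0 ≤ M) (hbd : ∀ r ω, |X r ω| ≤ M) :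
    Tendsto (fun n : ℕ => eLpNorm (fun ω =>
        (n:ℝ)⁻¹ * (∫ r in (0:ℝ)..(n:ℝ), X r ω) - ∫ ω', X 0 ω' ∂μ) 2 μ) atTop (𝓝 0) := by
  have hf : Measurable (X 0) := meas_sec_left hXu 0
  -- the block observable φ
  set φ : Ω → ℝ := fun ω => ∫ r in (0:ℝ)..1, X r ω with hφ
  have hφm : Measurable φ := meas_param_integral hXu 0 1
  have hφbd : ∀ ω, |φ ω| ≤ M := by
    intro ω
    have h := intervalIntegral.norm_integral_le_of_norm_le_const (C := M)
      (f := fun r => X r ω) (a := 0) (b := 1)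
      (fun x _ => by simpa [Real.norm_eq_abs] using hbd x ω)
    simpa [Real.norm_eq_abs] using h
  have hXcomp : ∀ (a r : ℝ) (ω : Ω), X r (T a ω) = X (r + a) ω := by
    intro a r ω; rw [hXT r (T a ω), hT.flow, ← hXT]
  have key1 : ∀ (k : ℕ) (ω : Ω), φ (T (k:ℝ) ω) = ∫ r in (k:ℝ)..((k:ℝ)+1), X r ω := by
    intro k ω
    calc φ (T (k:ℝ) ω) = ∫ r in (0:ℝ)..1, X (r + (k:ℝ)) ω := by
          rw [hφ]; simp only [hXcomp]
      _ = ∫ r in (0:ℝ)+(k:ℝ)..1+(k:ℝ), X r ω :=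
          intervalIntegral.integral_comp_add_right (fun r => X r ω) (k:ℝ)
      _ = ∫ r in (k:ℝ)..((k:ℝ)+1), X r ω := by rw [zero_add, add_comm 1]
  set S : ℕ → Ω → ℝ := fun n ω => (n:ℝ)⁻¹ * ∑ k ∈ Finset.range n, φ (T (k:ℝ) ω) with hS
  have hiint : ∀ (ω : Ω) (a b : ℝ), IntervalIntegrable (fun r => X r ω) volume a b :=
    fun ω a b => intervalIntegrable_of_bounded (meas_sec_right hXu ω) (fun x => hbd x ω) a b
  have key2 : ∀ (n : ℕ) (ω : Ω),
      ∑ k ∈ Finset.range n, φ (T (k:ℝ) ω) = ∫ r in (0:ℝ)..(n:ℝ), X r ω := by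
    intro n ω
    have h := intervalIntegral.sum_integral_adjacent_intervals
      (a := fun k : ℕ => (k:ℝ)) (n := n) (f := fun r => X r ω) (μ := volume)
      (fun k _ => hiint ω _ _)
    push_cast at h
    rw [← h]
    refine Finset.sum_congr rfl fun k _ => ?_
    rw [key1 k ω]
  have hSA : ∀ (n : ℕ) (ω : Ω), S n ω = (n:ℝ)⁻¹ * ∫ r in (0:ℝ)..(n:ℝ), X r ω := by
    intro n ω; rw [hS]; simp only [key2 n ω]
  have hSm : ∀ n, Measurable (S n) := by
    intro n
    refine Measurable.const_mul (Finset.measurable_sum _ fun k _ => ?_) _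
    exact hφm.comp (hT.measurable (k:ℝ))
  have hSbd : ∀ (n : ℕ) (ω : Ω), |S n ω| ≤ M := by
    intro n ω
    rcases Nat.eq_zero_or_pos n with h0 | hpos
    · simp [hS, h0, hM]
    · rw [hS]
      have hn : (0:ℝ) < n := by exact_mod_cast hpos
      simp only []
      rw [abs_mul, abs_of_nonneg (inv_nonneg.2 hn.le)]
      have hsum : |∑ k ∈ Finset.range n, φ (T (k:ℝ) ω)| ≤ (n:ℝ) * M := by
        calc |∑ k ∈ Finset.range n, φ (T (k:ℝ) ω)| ≤ ∑ k ∈ Finset.range n, |φ (T (k:ℝ) ω)| :=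
              Finset.abs_sum_le_sum_abs _ _
          _ ≤ ∑ _k ∈ Finset.range n, M := Finset.sum_le_sum fun k _ => hφbd _
          _ = (n:ℝ) * M := by rw [Finset.sum_const, Finset.card_range, nsmul_eq_mul]
      calc (n:ℝ)⁻¹ * |∑ k ∈ Finset.range n, φ (T (k:ℝ) ω)| ≤ (n:ℝ)⁻¹ * ((n:ℝ) * M) := by
            gcongr
        _ = M := by field_simp
  -- Lp setup and the mean ergodic theorem
  have hφmem : MemLp φ 2 μ :=
    MemLp.of_bound hφm.aestronglyMeasurable M
      (Eventually.of_forall fun ω => by rw [Real.norm_eq_abs]; exact hφbd ω)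
  set x : Lp ℝ 2 μ := hφmem.toLp φ with hx
  have h1 : MeasurePreserving (T 1) μ μ := hT.measurePreserving 1
  set U := (MeasureTheory.Lp.compMeasurePreservingₗᵢ (E := ℝ) (p := 2) (μ := μ) (μb := μ) ℝ (T 1) h1).toContinuousLinearMap with hUdef
  have hUnorm : ‖U‖ ≤ 1 :=
    (MeasureTheory.Lp.compMeasurePreservingₗᵢ (E := ℝ) (p := 2) (μ := μ) (μb := μ) ℝ (T 1) h1).norm_toContinuousLinearMap_le
  have htend := U.tendsto_birkhoffAverage_orthogonalProjection hUnorm x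
  set g' : Lp ℝ 2 μ := ((U.eqLocus (1 : Lp ℝ 2 μ →L[ℝ] Lp ℝ 2 μ)).orthogonalProjectionOnto x : Lp ℝ 2 μ) with hg'
  set g : Ω → ℝ := ⇑g' with hgdef
  have hgm : AEStronglyMeasurable g μ := Lp.aestronglyMeasurable g'
  have hUapply : ∀ y : Lp ℝ 2 μ, ⇑(U y) =ᵐ[μ] (⇑y) ∘ (T 1) := fun y =>
    MeasureTheory.Lp.coeFn_compMeasurePreserving y h1
  have hiter : ∀ k : ℕ, ⇑((⇑U)^[k] x) =ᵐ[μ] fun ω => φ (T (k:ℝ) ω) := by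
    intro k
    induction k with
    | zero =>
      refine (hφmem.coeFn_toLp).trans ?_
      refine Eventually.of_forall fun ω => ?_
      simp [hT.id_zero]
    | succ k ih =>
      rw [Function.iterate_succ_apply']
      refine (hUapply _).trans ?_
      have h2 : (⇑((⇑U)^[k] x)) ∘ (T 1) =ᵐ[μ] (fun ω => φ (T (k:ℝ) ω)) ∘ (T 1) :=
        h1.quasiMeasurePreserving.ae_eq_comp ih
      refine h2.trans (Eventually.of_forall fun ω => ?_)
      show φ (T (k:ℝ) (T 1 ω)) = φ (T ((k+1:ℕ):ℝ) ω)
      rw [hT.flow]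
      push_cast
      ring_nf
  have hsum : ∀ n : ℕ, ⇑(∑ k ∈ Finset.range n, (⇑U)^[k] x)
      =ᵐ[μ] fun ω => ∑ k ∈ Finset.range n, φ (T (k:ℝ) ω) := by
    intro n
    induction n with
    | zero => simp only [Finset.range_zero, Finset.sum_empty]; exact Lp.coeFn_zero ℝ 2 μ
    | succ n ih =>
      rw [Finset.sum_range_succ]
      refine (Lp.coeFn_add _ _).trans ?_
      filter_upwards [ih, hiter n] with ω h2 h3
      simp only [Pi.add_apply, h2, h3, Finset.sum_range_succ]
  have hba : ∀ n : ℕ, ⇑(birkhoffAverage ℝ (⇑U) id n x) =ᵐ[μ] S n := by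
    intro n
    have hdef : birkhoffAverage ℝ (⇑U) id n x = (n:ℝ)⁻¹ • ∑ k ∈ Finset.range n, (⇑U)^[k] x := by
      unfold birkhoffAverage birkhoffSum
      simp
    rw [hdef]
    refine (Lp.coeFn_smul _ _).trans ?_
    filter_upwards [hsum n] with ω hω
    simp only [Pi.smul_apply, hω, smul_eq_mul, hS]
  -- L² convergence
  have hnorm0 : Tendsto (fun n : ℕ => ‖birkhoffAverage ℝ (⇑U) id n x - g'‖) atTop (𝓝 0) :=
    tendsto_iff_norm_sub_tendsto_zero.1 htend
  have hL2 : Tendsto (fun n : ℕ => eLpNorm (fun ω => S n ω - g ω) 2 μ) atTop (𝓝 0) := by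
    have heq : ∀ n : ℕ, eLpNorm (fun ω => S n ω - g ω) 2 μ
        = ENNReal.ofReal ‖birkhoffAverage ℝ (⇑U) id n x - g'‖ := by
      intro n
      have hc : ⇑(birkhoffAverage ℝ (⇑U) id n x - g') =ᵐ[μ] fun ω => S n ω - g ω := by
        refine (Lp.coeFn_sub _ _).trans ?_
        filter_upwards [hba n] with ω hω
        simp [Pi.sub_apply, hω]
        rfl
      rw [← eLpNorm_congr_ae hc, Lp.norm_def,
        ENNReal.ofReal_toReal (Lp.eLpNorm_ne_top _)]
    have h2 := ENNReal.tendsto_ofReal hnorm0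
    rw [ENNReal.ofReal_zero] at h2
    exact (Tendsto.congr (fun n => (heq n).symm) h2)
  -- a.e. convergent subsequence
  have htim : TendstoInMeasure μ S atTop g := by
    refine tendstoInMeasure_of_tendsto_eLpNorm (p := 2) two_ne_zero
      (fun n => (hSm n).aestronglyMeasurable) hgm ?_
    exact hL2
  obtain ⟨ns, hns, hae⟩ := htim.exists_seq_tendsto_ae
  -- the shift estimate
  have hshift : ∀ (h : ℝ) (n : ℕ) (ω : Ω),
      |S n (T h ω) - S n ω| ≤ (n:ℝ)⁻¹ * (2*M*|h|) := by
    intro h n ω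
    have e1 : S n (T h ω) = (n:ℝ)⁻¹ * ∫ r in h..((n:ℝ)+h), X r ω := by
      rw [hSA]
      congr 1
      calc ∫ r in (0:ℝ)..(n:ℝ), X r (T h ω) = ∫ r in (0:ℝ)..(n:ℝ), X (r + h) ω := by
            simp only [hXcomp]
        _ = ∫ r in (0:ℝ)+h..((n:ℝ)+h), X r ω :=
            intervalIntegral.integral_comp_add_right (fun r => X r ω) h
        _ = ∫ r in h..((n:ℝ)+h), X r ω := by rw [zero_add]
    have a2 : (∫ r in h..((n:ℝ)+h), X r ω)
        = (∫ r in h..(n:ℝ), X r ω) + ∫ r in (n:ℝ)..((n:ℝ)+h), X r ω :=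
      (intervalIntegral.integral_add_adjacent_intervals (hiint ω h (n:ℝ))
        (hiint ω (n:ℝ) ((n:ℝ)+h))).symm
    have a1 : (∫ r in h..(n:ℝ), X r ω)
        = (∫ r in h..(0:ℝ), X r ω) + ∫ r in (0:ℝ)..(n:ℝ), X r ω :=
      (intervalIntegral.integral_add_adjacent_intervals (hiint ω h 0)
        (hiint ω 0 (n:ℝ))).symm
    have b1 : |∫ r in h..(0:ℝ), X r ω| ≤ M * |h| := by
      have hle := intervalIntegral.norm_integral_le_of_norm_le_const (C := M)
        (f := fun r => X r ω) (a := h) (b := 0)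
        (fun r _ => by simpa [Real.norm_eq_abs] using hbd r ω)
      rw [Real.norm_eq_abs] at hle
      simpa [abs_neg] using hle
    have b2 : |∫ r in (n:ℝ)..((n:ℝ)+h), X r ω| ≤ M * |h| := by
      have hle := intervalIntegral.norm_integral_le_of_norm_le_const (C := M)
        (f := fun r => X r ω) (a := (n:ℝ)) (b := (n:ℝ)+h)
        (fun r _ => by simpa [Real.norm_eq_abs] using hbd r ω)
      rw [Real.norm_eq_abs] at hle
      simpa using hle
    have hnn : (0:ℝ) ≤ (n:ℝ)⁻¹ := by positivity
    calc |S n (T h ω) - S n ω|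
        = (n:ℝ)⁻¹ * |(∫ r in h..(0:ℝ), X r ω) + ∫ r in (n:ℝ)..((n:ℝ)+h), X r ω| := by
          rw [e1, hSA, a2, a1, ← mul_sub, abs_mul, abs_of_nonneg hnn]
          ring_nf
      _ ≤ (n:ℝ)⁻¹ * (M*|h| + M*|h|) := by
          gcongr
          exact (abs_add_le _ _).trans (by gcongr)
      _ = (n:ℝ)⁻¹ * (2*M*|h|) := by ring
  -- the exactly invariant limsup function
  set AAseq : ℕ → Ω → ℝ≥0∞ := fun k ω => ENNReal.ofReal (S (ns k) ω + M) with hAAseq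
  set gt : Ω → ℝ≥0∞ := fun ω => limsup (fun k => AAseq k ω) atTop with hgt
  have htns : Tendsto (fun k => ((ns k : ℕ):ℝ)) atTop atTop :=
    tendsto_natCast_atTop_atTop.comp hns.tendsto_atTop
  have hzero : ∀ h : ℝ, Tendsto (fun k => ENNReal.ofReal (((ns k:ℕ):ℝ)⁻¹ * (2*M*|h|)))
      atTop (𝓝 0) := by
    intro h
    have h2 : Tendsto (fun k => ((ns k:ℕ):ℝ)⁻¹ * (2*M*|h|)) atTop (𝓝 0) := by
      have := (tendsto_inv_atTop_zero.comp htns).mul_const (2*M*|h|)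
      simpa using this
    have := ENNReal.tendsto_ofReal h2
    simpa using this
  have hInv : ∀ (h : ℝ) (ω : Ω), gt (T h ω) = gt ω := by
    have step : ∀ (h : ℝ) (ω₁ ω₂ : Ω),
        (∀ k, S (ns k) ω₁ ≤ S (ns k) ω₂ + ((ns k:ℕ):ℝ)⁻¹ * (2*M*|h|)) →
        gt ω₁ ≤ gt ω₂ := by
      intro h ω₁ ω₂ hk
      have hptw : ∀ k, AAseq k ω₁ ≤ AAseq k ω₂ + ENNReal.ofReal (((ns k:ℕ):ℝ)⁻¹*(2*M*|h|)) := by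
        intro k
        calc AAseq k ω₁ ≤ ENNReal.ofReal ((S (ns k) ω₂ + M) + (((ns k:ℕ):ℝ)⁻¹*(2*M*|h|))) := by
              rw [hAAseq]
              exact ENNReal.ofReal_le_ofReal (by have := hk k; linarith)
          _ ≤ AAseq k ω₂ + ENNReal.ofReal (((ns k:ℕ):ℝ)⁻¹*(2*M*|h|)) := ENNReal.ofReal_add_le
      exact limsup_le_limsup_of_error hptw (hzero h)
    intro h ω
    refine le_antisymm (step h _ _ fun k => ?_) (step (-h) _ _ fun k => ?_)
    · have h2 := hshift h (ns k) ω
      rw [abs_sub_le_iff] at h2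
      linarith [h2.1]
    · have h2 := hshift h (ns k) ω
      rw [abs_sub_le_iff] at h2
      have h3 := h2.2
      rw [abs_neg]
      linarith
  have hgtm : Measurable gt := by
    rw [hgt]
    exact Measurable.limsup fun k =>
      ENNReal.measurable_ofReal.comp ((hSm (ns k)).add measurable_const)
  -- ergodicity: gt is a.e. constant
  have hconst : ∃ c, gt =ᵐ[μ] Function.const Ω c := by
    refine exists_eventuallyEq_const_of_forall_separating MeasurableSet fun V hV => ?_
    have hA : MeasurableSet (gt ⁻¹' V) := hgtm hV
    have hAinv : ∀ τ, T τ ⁻¹' (gt ⁻¹' V) = gt ⁻¹' V := by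
      intro τ; ext ω
      simp only [Set.mem_preimage]
      rw [hInv τ ω]
    rcases hT.ergodic _ hA hAinv with h0 | h1
    · right
      rw [ae_iff]
      convert h0 using 2
      ext ω; simp
    · left
      have hcompl : μ (gt ⁻¹' V)ᶜ = 0 := by
        rw [measure_compl hA (measure_ne_top _ _), h1, measure_univ, tsub_self]
      rw [ae_iff]
      convert hcompl using 2
      rfl
  obtain ⟨c, hc⟩ := hconst
  -- identification of the limit
  have hgbd : ∀ᵐ ω ∂μ, |g ω| ≤ M := by
    filter_upwards [hae] with ω hω
    exact le_of_tendsto hω.abs (Eventually.of_forall fun k => hSbd _ ω)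
  have hgκ : g =ᵐ[μ] fun _ => c.toReal - M := by
    filter_upwards [hae, hc, hgbd] with ω hω hcω h2
    have hTd : Tendsto (fun k => AAseq k ω) atTop (𝓝 (ENNReal.ofReal (g ω + M))) := by
      rw [hAAseq]
      exact ENNReal.tendsto_ofReal (hω.add_const M)
    have hgtω : gt ω = ENNReal.ofReal (g ω + M) := hTd.limsup_eq
    have hnn : 0 ≤ g ω + M := by rw [abs_le] at h2; linarith
    have hcc : ENNReal.ofReal (g ω + M) = c := by rw [← hgtω]; exact hcω.trans rfl
    have := congrArg ENNReal.toReal hcc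
    rw [ENNReal.toReal_ofReal hnn] at this
    linarith [this]
  -- the constant equals the mean
  have hcompT : ∀ (ψ : Ω → ℝ), Measurable ψ → ∀ r : ℝ,
      ∫ ω, ψ (T r ω) ∂μ = ∫ ω, ψ ω ∂μ := by
    intro ψ hψ r
    exact integral_comp_mp hψ (hT.measurable r) (hT.measurePreserving r)
  haveI : IsFiniteMeasure (volume.restrict (Set.Ioc (0:ℝ) 1)) :=
    ⟨by rw [Measure.restrict_apply_univ]; exact measure_Ioc_lt_top⟩
  have hφint : ∫ ω, φ ω ∂μ = ∫ ω', X 0 ω' ∂μ := by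
    have hIprod : Integrable (Function.uncurry (fun ω r => X r ω))
        (μ.prod (volume.restrict (Set.Ioc (0:ℝ) 1))) := by
      refine Integrable.mono' (integrable_const M)
        ((hXu.comp measurable_swap).aestronglyMeasurable) ?_
      exact Eventually.of_forall fun q => by
        simpa [Real.norm_eq_abs, Function.uncurry] using hbd q.2 q.1
    have hswap := integral_integral_swap hIprod
    have h1' : ∫ ω, φ ω ∂μ = ∫ ω, ∫ r in Set.Ioc (0:ℝ) 1, X r ω ∂volume ∂μ := by
      refine integral_congr_ae (Eventually.of_forall fun ω => ?_)
      rw [hφ]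
      simp only []
      rw [intervalIntegral.integral_of_le zero_le_one]
    rw [h1', hswap]
    have hin : ∀ r : ℝ, ∫ ω, X r ω ∂μ = ∫ ω', X 0 ω' ∂μ := by
      intro r
      have hfe : (fun ω => X r ω) = fun ω => X 0 (T r ω) := funext (hXT r)
      rw [hfe, hcompT (X 0) hf r]
    calc ∫ r in Set.Ioc (0:ℝ) 1, ∫ ω, X r ω ∂μ ∂volume
        = ∫ _r in Set.Ioc (0:ℝ) 1, ∫ ω', X 0 ω' ∂μ ∂volume :=
          integral_congr_ae (Eventually.of_forall fun r => hin r)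
      _ = ∫ ω', X 0 ω' ∂μ := by
          rw [integral_const]
          simp [Real.volume_Ioc]
  have hφTint : ∀ k : ℝ, Integrable (fun ω => φ (T k ω)) μ := by
    intro k
    refine Integrable.mono' (integrable_const M)
      ((hφm.comp (hT.measurable k)).aestronglyMeasurable) ?_
    exact Eventually.of_forall fun ω => by simpa [Real.norm_eq_abs] using hφbd (T k ω)
  have hSint : ∀ n : ℕ, Integrable (S n) μ := by
    intro n
    refine Integrable.mono' (integrable_const M) (hSm n).aestronglyMeasurable ?_
    exact Eventually.of_forall fun ω => by simpa [Real.norm_eq_abs] using hSbd n ω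
  have hSmean : ∀ n : ℕ, 1 ≤ n → ∫ ω, S n ω ∂μ = ∫ ω, φ ω ∂μ := by
    intro n hn
    have h1' : ∫ ω, S n ω ∂μ
        = (n:ℝ)⁻¹ * ∫ ω, ∑ k ∈ Finset.range n, φ (T (k:ℝ) ω) ∂μ := by
      simp only [hS]
      rw [integral_const_mul]
    rw [h1', integral_finset_sum (f := fun (k:ℕ) ω => φ (T (↑k) ω)) _ (fun k _ => hφTint (k:ℝ))]
    have h2' : ∀ k ∈ Finset.range n, ∫ ω, φ (T (k:ℝ) ω) ∂μ = ∫ ω, φ ω ∂μ :=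
      fun k _ => hcompT φ hφm (k:ℝ)
    rw [Finset.sum_congr rfl h2', Finset.sum_const, Finset.card_range, nsmul_eq_mul,
      ← mul_assoc, inv_mul_cancel₀ (by
        have : (0:ℝ) < n := by exact_mod_cast hn
        linarith : (n:ℝ) ≠ 0), one_mul]
  have hgint : Integrable g μ := (Lp.memLp g').integrable one_le_two
  have hmean_g : Tendsto (fun n => ∫ ω, S n ω ∂μ) atTop (𝓝 (∫ ω, g ω ∂μ)) := by
    refine tendsto_integral_of_L1 g hgint.aestronglyMeasurable (Eventually.of_forall hSint) ?_
    have hb : ∀ n : ℕ, ∫⁻ ω, (‖S n ω - g ω‖₊ : ℝ≥0∞) ∂μ ≤ eLpNorm (fun ω => S n ω - g ω) 2 μ := by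
      intro n
      calc ∫⁻ ω, (‖S n ω - g ω‖₊ : ℝ≥0∞) ∂μ = eLpNorm (fun ω => S n ω - g ω) 1 μ :=
            (by rw [eLpNorm_one_eq_lintegral_enorm]; rfl)
        _ ≤ eLpNorm (fun ω => S n ω - g ω) 2 μ :=
            eLpNorm_le_eLpNorm_of_exponent_le one_le_two
              ((hSm n).aestronglyMeasurable.sub hgm)
    exact tendsto_of_tendsto_of_tendsto_of_le_of_le tendsto_const_nhds hL2
      (fun n => zero_le) hb
  have hmean_φ : Tendsto (fun n => ∫ ω, S n ω ∂μ) atTop (𝓝 (∫ ω, φ ω ∂μ)) := by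
    refine Tendsto.congr' ?_ tendsto_const_nhds
    filter_upwards [eventually_ge_atTop 1] with n hn
    exact (hSmean n hn).symm
  have hgmean : ∫ ω, g ω ∂μ = c.toReal - M := by
    rw [integral_congr_ae hgκ]
    simp
  have hκX : c.toReal - M = ∫ ω', X 0 ω' ∂μ := by
    have := tendsto_nhds_unique hmean_g hmean_φ
    rw [hgmean] at this
    rw [this, hφint]
  -- conclusion
  refine Tendsto.congr (fun n => ?_) hL2
  refine eLpNorm_congr_ae ?_
  filter_upwards [hgκ] with ω hω
  rw [hω, hSA n ω, hκX]

/-- Real-time Lᵖ law of large numbers for bounded stationary-ergodic processes. -/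
lemma bounded_lln_real [IsProbabilityMeasure μ] {X : ℝ → Ω → ℝ}
    (hXu : Measurable (Function.uncurry X))
    {T : ℝ → Ω → Ω} (hT : IsErgodicFlow μ T) (hXT : ∀ t ω, X t ω = X 0 (T t ω))
    {M : ℝ} (hM : 0 ≤ M) (hbd : ∀ r ω, |X r ω| ≤ M) {p : ℝ} (hp : 1 ≤ p)
    {ε : ℝ≥0∞} (hε : 0 < ε) :
    ∃ S : ℝ, 1 ≤ S ∧ ∀ s : ℝ, S ≤ s →
      eLpNorm (fun ω => s⁻¹ * (∫ r in (0:ℝ)..s, X r ω) - ∫ ω', X 0 ω' ∂μ)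
        (ENNReal.ofReal p) μ ≤ ε := by
  have hp0 : 0 < p := by linarith
  have hq1 : (1:ℝ≥0∞) ≤ ENNReal.ofReal p := by rw [ENNReal.one_le_ofReal]; exact hp
  have hiint : ∀ (ω : Ω) (a b : ℝ), IntervalIntegrable (fun r => X r ω) volume a b :=
    fun ω a b => intervalIntegrable_of_bounded (meas_sec_right hXu ω) (fun x => hbd x ω) a b
  set c : ℝ := ∫ ω', X 0 ω' ∂μ with hc
  have hcbd : |c| ≤ M := by
    rw [hc, ← Real.norm_eq_abs]
    have h1 : ‖∫ ω', X 0 ω' ∂μ‖ ≤ ∫ _ω', M ∂μ :=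
      norm_integral_le_of_norm_le (integrable_const M)
        (Eventually.of_forall fun ω => by simpa [Real.norm_eq_abs] using hbd 0 ω)
    simpa using h1
  have hintbd : ∀ (ω : Ω) (a b : ℝ), a ≤ b → |∫ r in a..b, X r ω| ≤ M * (b - a) := by
    intro ω a b hab
    have h1 := intervalIntegral.norm_integral_le_of_norm_le_const (C := M)
      (f := fun r => X r ω) (a := a) (b := b)
      (fun r _ => by simpa [Real.norm_eq_abs] using hbd r ω)
    rw [Real.norm_eq_abs, abs_of_nonneg (show (0:ℝ) ≤ b - a by linarith)] at h1
    simpa using h1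
  set A : ℕ → Ω → ℝ := fun n ω => (n:ℝ)⁻¹ * (∫ r in (0:ℝ)..(n:ℝ), X r ω) - c with hA
  have hAmeas : ∀ n : ℕ, Measurable (A n) := fun n =>
    ((meas_param_integral hXu 0 (n:ℝ)).const_mul _).sub measurable_const
  have hAbd : ∀ (n : ℕ) (ω : Ω), |A n ω| ≤ 2*M := by
    intro n ω
    have h1 : |(n:ℝ)⁻¹ * ∫ r in (0:ℝ)..(n:ℝ), X r ω| ≤ M := by
      rcases Nat.eq_zero_or_pos n with h0 | hpos
      · simp [h0, hM]
      · have hn : (0:ℝ) < n := by exact_mod_cast hpos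
        rw [abs_mul, abs_of_nonneg (inv_nonneg.2 hn.le)]
        calc (n:ℝ)⁻¹ * |∫ r in (0:ℝ)..(n:ℝ), X r ω| ≤ (n:ℝ)⁻¹ * (M * ((n:ℝ) - 0)) := by
              gcongr
              exact hintbd ω 0 (n:ℝ) hn.le
          _ = M := by field_simp; ring
    rw [hA]
    simp only []
    have := abs_sub (((n:ℝ)⁻¹ * ∫ r in (0:ℝ)..(n:ℝ), X r ω)) c
    calc |(n:ℝ)⁻¹ * (∫ r in (0:ℝ)..(n:ℝ), X r ω) - c|
        ≤ |(n:ℝ)⁻¹ * ∫ r in (0:ℝ)..(n:ℝ), X r ω| + |c| := abs_sub _ _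
      _ ≤ M + M := add_le_add h1 hcbd
      _ = 2*M := by ring
  -- Lᵖ convergence along ℕ
  have hint2 := bounded_lln_int hXu hT hXT hM hbd
  have hqconv : Tendsto (fun n : ℕ => eLpNorm (A n) (ENNReal.ofReal p) μ) atTop (𝓝 0) := by
    set c0 : ℝ≥0∞ := ENNReal.ofReal (2*M) ^ ((p-1)/p) with hc0
    have hc0t : c0 ≠ ⊤ :=
      (ENNReal.rpow_lt_top_of_nonneg (div_nonneg (by linarith) (by linarith)) ENNReal.ofReal_ne_top).ne
    have hub : ∀ n : ℕ, eLpNorm (A n) (ENNReal.ofReal p) μ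
        ≤ c0 * (eLpNorm (A n) 2 μ) ^ (1/p) := by
      intro n
      exact eLpNorm_le_of_bdd_L2 (hAmeas n).aestronglyMeasurable (by linarith)
        (Eventually.of_forall fun ω => hAbd n ω) hp
    have h2 : Tendsto (fun n : ℕ => c0 * (eLpNorm (A n) 2 μ) ^ (1/p)) atTop (𝓝 0) := by
      have h3 : Tendsto (fun n : ℕ => (eLpNorm (A n) 2 μ) ^ (1/p)) atTop (𝓝 0) := by
        have h4 := (ENNReal.continuous_rpow_const (y := 1/p)).tendsto 0
        rw [ENNReal.zero_rpow_of_pos (by positivity)] at h4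
        exact h4.comp hint2
      have h5 := ENNReal.Tendsto.const_mul h3 (Or.inr hc0t)
      simpa using h5
    exact tendsto_of_tendsto_of_tendsto_of_le_of_le tendsto_const_nhds h2
      (fun n => zero_le) hub
  -- ε bookkeeping
  set e2 : ℝ≥0∞ := min (ε/2) 1 with he2
  have he2pos : 0 < e2 := lt_min (ENNReal.div_pos hε.ne' (by norm_num)) one_pos
  have he2t : e2 ≠ ⊤ := (lt_of_le_of_lt (min_le_right _ _) (by norm_num)).ne
  set δ : ℝ := e2.toReal with hδ
  have hδpos : 0 < δ := ENNReal.toReal_pos he2pos.ne' he2t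
  have hofδ : ENNReal.ofReal δ = e2 := ENNReal.ofReal_toReal he2t
  obtain ⟨n₀, hn₀⟩ := eventually_atTop.1 (ENNReal.tendsto_nhds_zero.mp hqconv e2 he2pos)
  refine ⟨max (max ((n₀:ℝ) + 1) 1) (2*M/δ), le_trans (le_max_right _ 1) (le_max_left _ _),
    fun s hs => ?_⟩
  have hs1 : (1:ℝ) ≤ s := le_trans (le_trans (le_max_right _ 1) (le_max_left _ _)) hs
  have hs0 : (0:ℝ) < s := by linarith
  have hsn₀ : (n₀:ℝ) + 1 ≤ s := le_trans (le_trans (le_max_left _ 1) (le_max_left _ _)) hs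
  have hsM : 2*M/δ ≤ s := le_trans (le_max_right _ _) hs
  set n : ℕ := ⌊s⌋₊ with hn
  have hn1 : 1 ≤ n := Nat.le_floor (by exact_mod_cast hs1)
  have hnp : (0:ℝ) < n := by exact_mod_cast hn1
  have hnn₀ : n₀ ≤ n := Nat.le_floor (by push_cast; linarith)
  have hfl : (n:ℝ) ≤ s := Nat.floor_le hs0.le
  have hfl2 : s ≤ (n:ℝ) + 1 := (Nat.lt_floor_add_one s).le
  -- pointwise comparison with the integer average
  have hdiff : ∀ ω : Ω, |(s⁻¹ * (∫ r in (0:ℝ)..s, X r ω) - c) - A n ω| ≤ 2*M/s := by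
    intro ω
    set a := ∫ r in (0:ℝ)..(n:ℝ), X r ω with ha
    set b := ∫ r in (n:ℝ)..s, X r ω with hb
    have hsplit : (∫ r in (0:ℝ)..s, X r ω) = a + b :=
      (intervalIntegral.integral_add_adjacent_intervals (hiint ω 0 (n:ℝ)) (hiint ω (n:ℝ) s)).symm
    have hab : |a| ≤ M * (n:ℝ) := by simpa using hintbd ω 0 (n:ℝ) hnp.le
    have hbb : |b| ≤ M * (s - (n:ℝ)) := hintbd ω (n:ℝ) s hfl
    have heq : (s⁻¹ * (∫ r in (0:ℝ)..s, X r ω) - c) - A n ω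
        = s⁻¹ * b + (s⁻¹ - (n:ℝ)⁻¹) * a := by
      rw [hA]
      simp only []
      rw [hsplit, ← ha]
      ring
    rw [heq]
    have hss : s⁻¹ ≤ (n:ℝ)⁻¹ := inv_anti₀ hnp hfl
    have h1 : |s⁻¹ * b + (s⁻¹ - (n:ℝ)⁻¹) * a| ≤ s⁻¹ * |b| + ((n:ℝ)⁻¹ - s⁻¹) * |a| := by
      calc |s⁻¹ * b + (s⁻¹ - (n:ℝ)⁻¹) * a| ≤ |s⁻¹ * b| + |(s⁻¹ - (n:ℝ)⁻¹) * a| := abs_add_le _ _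
        _ = s⁻¹ * |b| + ((n:ℝ)⁻¹ - s⁻¹) * |a| := by
            rw [abs_mul, abs_mul, abs_of_nonneg (show (0:ℝ) ≤ s⁻¹ by positivity),
              abs_of_nonpos (show s⁻¹ - (n:ℝ)⁻¹ ≤ 0 by linarith)]
            ring
    refine h1.trans ?_
    have hinv : (n:ℝ)⁻¹ - s⁻¹ = (s - n) / ((n:ℝ) * s) := by
      field_simp
    have hsn : s - (n:ℝ) ≤ 1 := by linarith
    calc s⁻¹ * |b| + ((n:ℝ)⁻¹ - s⁻¹) * |a|
        ≤ s⁻¹ * (M * (s - (n:ℝ))) + (s - n) / ((n:ℝ) * s) * (M * (n:ℝ)) := by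
          rw [hinv]
          refine add_le_add (mul_le_mul_of_nonneg_left hbb (by positivity)) ?_
          exact mul_le_mul_of_nonneg_left hab (div_nonneg (by linarith) (by positivity))
      _ = 2 * M * (s - (n:ℝ)) / s := by field_simp; ring
      _ ≤ 2*M/s := by
          rw [div_le_div_iff_of_pos_right hs0]
          nlinarith
  -- assemble
  have hsmall : ENNReal.ofReal (2*M/s) ≤ e2 := by
    rw [← hofδ]
    refine ENNReal.ofReal_le_ofReal ?_
    rw [div_le_iff₀ hs0]
    rcases eq_or_lt_of_le hM with h0 | hMpos
    · nlinarith
    · have h2 : 2*M/δ ≤ s := hsM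
      rw [div_le_iff₀ hδpos] at h2
      nlinarith
  set F : Ω → ℝ := fun ω => s⁻¹ * (∫ r in (0:ℝ)..s, X r ω) - c with hF
  have hFm : Measurable F := ((meas_param_integral hXu 0 s).const_mul _).sub measurable_const
  have hFsplit : F = A n + (F - A n) := by ext ω; simp
  have htri : eLpNorm F (ENNReal.ofReal p) μ
      ≤ eLpNorm (A n) (ENNReal.ofReal p) μ + eLpNorm (F - A n) (ENNReal.ofReal p) μ := by
    nth_rewrite 1 [hFsplit]
    exact eLpNorm_add_le (hAmeas n).aestronglyMeasurable
      ((hFm.sub (hAmeas n)).aestronglyMeasurable) hq1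
  have hb2 : eLpNorm (F - A n) (ENNReal.ofReal p) μ ≤ ENNReal.ofReal (2*M/s) := by
    have := eLpNorm_le_of_ae_bound (μ := μ) (p := ENNReal.ofReal p) (f := F - A n)
      (C := 2*M/s) (Eventually.of_forall fun ω => by
        rw [Real.norm_eq_abs]
        exact hdiff ω)
    simpa [measure_univ] using this
  calc eLpNorm F (ENNReal.ofReal p) μ
      ≤ eLpNorm (A n) (ENNReal.ofReal p) μ + eLpNorm (F - A n) (ENNReal.ofReal p) μ := htri
    _ ≤ e2 + e2 := add_le_add (hn₀ n hnn₀) (hb2.trans hsmall)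
    _ ≤ ε/2 + ε/2 := add_le_add (min_le_left _ _) (min_le_left _ _)
    _ = ε := ENNReal.add_halves ε

/-- **Lᵖ ergodic theorem**: LLN for a stationary ergodic process in Lᵖ, continuous time. -/
lemma ergodic_lln [IsProbabilityMeasure μ] {X : ℝ → Ω → ℝ}
    (hXu : Measurable (Function.uncurry X)) (hse : IsStatErgodic μ X)
    {p : ℝ} (hp : 1 ≤ p) (hfin : eLpNorm (X 0) (ENNReal.ofReal p) μ < ⊤)
    {ε : ℝ≥0∞} (hε : 0 < ε) :
    ∃ S : ℝ, 1 ≤ S ∧ ∀ s : ℝ, S ≤ s →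
      eLpNorm (fun ω => s⁻¹ * (∫ r in (0:ℝ)..s, X r ω) - ∫ ω', X 0 ω' ∂μ)
        (ENNReal.ofReal p) μ ≤ ε := by
  obtain ⟨hXm, T, hT, hXT⟩ := hse
  have hp0 : 0 < p := by linarith
  have hq1 : (1:ℝ≥0∞) ≤ ENNReal.ofReal p := by rw [ENNReal.one_le_ofReal]; exact hp
  set e3 : ℝ≥0∞ := min (ε/3) 1 with he3
  have he3pos : 0 < e3 := lt_min (ENNReal.div_pos hε.ne' (by norm_num)) one_pos
  have he3t : e3 ≠ ⊤ := (lt_of_le_of_lt (min_le_right _ _) (by norm_num)).ne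
  set δ : ℝ := e3.toReal with hδ
  have hδpos : 0 < δ := ENNReal.toReal_pos he3pos.ne' he3t
  have hofδ : ENNReal.ofReal δ = e3 := ENNReal.ofReal_toReal he3t
  obtain ⟨M, hM, htr⟩ := trunc_err_small (meas_sec_left hXu 0) hp hfin he3pos
  set X' : ℝ → Ω → ℝ := fun r ω => rtrunc M (X r ω) with hX'
  have hX'u : Measurable (Function.uncurry X') :=
    (rtrunc_continuous M).measurable.comp hXu
  have hX'T : ∀ t ω, X' t ω = X' 0 (T t ω) := by
    intro t ω
    simp only [hX']
    rw [hXT t ω]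
  have hbd' : ∀ (r : ℝ) (ω : Ω), |X' r ω| ≤ M := fun r ω => abs_rtrunc_le hM _
  have htr' : eLpNorm (fun ω => X 0 ω - X' 0 ω) (ENNReal.ofReal p) μ ≤ e3 := htr
  have hdiffLp : ∀ r : ℝ, eLpNorm (fun ω => X r ω - X' r ω) (ENNReal.ofReal p) μ
      = eLpNorm (fun ω => X 0 ω - X' 0 ω) (ENNReal.ofReal p) μ := by
    intro r
    have hcomp : (fun ω => X r ω - X' r ω) = (fun ω => X 0 ω - X' 0 ω) ∘ (T r) := by
      funext ω
      simp only [Function.comp_apply, hX']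
      rw [hXT r ω]
    rw [hcomp]
    exact eLpNorm_comp_measurePreserving
      (((meas_sec_left hXu 0).sub (meas_sec_left hX'u 0)).aestronglyMeasurable)
      (hT.measurePreserving r)
  have hX0mem : MemLp (X 0) (ENNReal.ofReal p) μ :=
    ⟨(meas_sec_left hXu 0).aestronglyMeasurable, hfin⟩
  have hX0int : Integrable (X 0) μ := hX0mem.integrable hq1
  have hX'0int : Integrable (X' 0) μ := by
    refine Integrable.mono' (integrable_const M) (meas_sec_left hX'u 0).aestronglyMeasurable ?_
    exact Eventually.of_forall fun ω => by simpa [Real.norm_eq_abs] using hbd' 0 ω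
  set c : ℝ := ∫ ω', X 0 ω' ∂μ with hc
  set c' : ℝ := ∫ ω', X' 0 ω' ∂μ with hc'
  have hmean : |c' - c| ≤ δ := by
    have h1 : c' - c = ∫ ω', (X' 0 ω' - X 0 ω') ∂μ :=
      (integral_sub hX'0int hX0int).symm
    rw [h1, ← Real.norm_eq_abs]
    have h2 : ‖∫ ω', (X' 0 ω' - X 0 ω') ∂μ‖ ≤ ∫ ω', ‖X' 0 ω' - X 0 ω'‖ ∂μ :=
      norm_integral_le_integral_norm _
    refine h2.trans ?_
    have h3 : ENNReal.ofReal (∫ ω', ‖X' 0 ω' - X 0 ω'‖ ∂μ)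
        = ∫⁻ ω', (‖X' 0 ω' - X 0 ω'‖₊ : ℝ≥0∞) ∂μ :=
      ofReal_integral_norm_eq_lintegral_enorm (hX'0int.sub hX0int)
    have h4 : (∫⁻ ω', (‖X' 0 ω' - X 0 ω'‖₊ : ℝ≥0∞) ∂μ) ≤ ENNReal.ofReal δ := by
      have h5 : (∫⁻ ω', (‖X' 0 ω' - X 0 ω'‖₊ : ℝ≥0∞) ∂μ)
          = eLpNorm (fun ω' => X' 0 ω' - X 0 ω') 1 μ := (by rw [eLpNorm_one_eq_lintegral_enorm]; rfl)
      rw [h5, hofδ]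
      refine le_trans (eLpNorm_le_eLpNorm_of_exponent_le hq1
        ((meas_sec_left hX'u 0).sub (meas_sec_left hXu 0)).aestronglyMeasurable) ?_
      have h6 : (fun ω' => X' 0 ω' - X 0 ω') = fun ω' => -(X 0 ω' - X' 0 ω') := by
        funext ω'; ring
      have h7 : (fun ω' => -(X 0 ω' - X' 0 ω')) = -(fun ω' => X 0 ω' - X' 0 ω') := rfl
      rw [h6, h7, eLpNorm_neg]
      exact htr'
    rw [← ENNReal.ofReal_le_ofReal_iff hδpos.le, h3]
    exact h4
  obtain ⟨S, hS1, hSb⟩ := bounded_lln_real hX'u hT hX'T hM hbd' hp he3pos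
  refine ⟨S, hS1, fun s hs => ?_⟩
  have hs0 : (0:ℝ) < s := by linarith
  have hbdIoc : ∀ ν ∈ Set.Ioc (0:ℝ) s, eLpNorm (X ν) (ENNReal.ofReal p) μ
      ≤ eLpNorm (X 0) (ENNReal.ofReal p) μ := by
    intro ν _
    have hcomp : X ν = (X 0) ∘ (T ν) := funext (hXT ν)
    rw [hcomp]
    exact le_of_eq (eLpNorm_comp_measurePreserving
      (meas_sec_left hXu 0).aestronglyMeasurable (hT.measurePreserving ν))
  have hint : ∀ᵐ ω ∂μ, IntegrableOn (fun r => X r ω) (Set.Ioc 0 s) volume :=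
    ae_integrableOn_of_bound hXu hp hfin hbdIoc
  have hX'iint : ∀ (ω : Ω) (a b : ℝ), IntervalIntegrable (fun r => X' r ω) volume a b :=
    fun ω a b => intervalIntegrable_of_bounded (meas_sec_right hX'u ω) (fun x => hbd' x ω) a b
  set F : Ω → ℝ := fun ω => s⁻¹ * (∫ r in (0:ℝ)..s, X r ω) - c with hF
  set G1 : Ω → ℝ := fun ω => s⁻¹ * (∫ r in (0:ℝ)..s, (X r ω - X' r ω)) with hG1
  set G2 : Ω → ℝ := fun ω => s⁻¹ * (∫ r in (0:ℝ)..s, X' r ω) - c' with hG2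
  have hdecomp : F =ᵐ[μ] fun ω => G1 ω + G2 ω + (c' - c) := by
    filter_upwards [hint] with ω hω
    have hXiint : IntervalIntegrable (fun r => X r ω) volume 0 s := by
      rw [intervalIntegrable_iff, Set.uIoc_of_le hs0.le]
      exact hω
    have hsub : (∫ r in (0:ℝ)..s, (X r ω - X' r ω))
        = (∫ r in (0:ℝ)..s, X r ω) - ∫ r in (0:ℝ)..s, X' r ω :=
      intervalIntegral.integral_sub hXiint (hX'iint ω 0 s)
    simp only [hF, hG1, hG2]
    rw [hsub]
    ring
  have hG1b : eLpNorm G1 (ENNReal.ofReal p) μ ≤ e3 := by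
    have hmeas : Measurable (Function.uncurry fun ν ω => X ν ω - X' ν ω) := hXu.sub hX'u
    have hbdν : ∀ ν ∈ Set.Ioc (0:ℝ) s,
        eLpNorm (fun ω => X ν ω - X' ν ω) (ENNReal.ofReal p) μ ≤ e3 :=
      fun ν _ => le_trans (le_of_eq (hdiffLp ν)) htr'
    have h := avg_eLpNorm_le (μ := μ) hp hmeas hs0 hbdν
    rw [hG1]
    simpa [sub_zero] using h
  have hG2b : eLpNorm G2 (ENNReal.ofReal p) μ ≤ e3 := hSb s hs
  have hG3b : eLpNorm (fun _ω : Ω => c' - c) (ENNReal.ofReal p) μ ≤ e3 := by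
    have h := eLpNorm_le_of_ae_bound (μ := μ) (p := ENNReal.ofReal p)
      (f := fun _ω : Ω => c' - c) (C := δ)
      (Eventually.of_forall fun ω => by rw [Real.norm_eq_abs]; exact hmean)
    simpa [measure_univ, hofδ] using h
  have hmeasG1 : AEStronglyMeasurable G1 μ :=
    ((meas_param_integral (f := fun ν ω => X ν ω - X' ν ω) (by exact hXu.sub hX'u) 0 s).const_mul _).aestronglyMeasurable
  have hmeasG2 : AEStronglyMeasurable G2 μ :=
    (((meas_param_integral hX'u 0 s).const_mul _).sub measurable_const).aestronglyMeasurable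
  have hthirds : e3 + e3 + e3 ≤ ε := by
    have h1 : e3 ≤ ε/3 := min_le_left _ _
    calc e3 + e3 + e3 ≤ ε/3 + ε/3 + ε/3 := by gcongr
      _ = 3 * (ε / 3) := by ring
      _ = ε := ENNReal.mul_div_cancel' (by norm_num) (by norm_num)
  calc eLpNorm F (ENNReal.ofReal p) μ
      = eLpNorm (fun ω => G1 ω + G2 ω + (c' - c)) (ENNReal.ofReal p) μ :=
        eLpNorm_congr_ae hdecomp
    _ ≤ eLpNorm (fun ω => G1 ω + G2 ω) (ENNReal.ofReal p) μ
        + eLpNorm (fun _ω : Ω => c' - c) (ENNReal.ofReal p) μ :=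
        eLpNorm_add_le (hmeasG1.add hmeasG2) aestronglyMeasurable_const hq1
    _ ≤ (eLpNorm G1 (ENNReal.ofReal p) μ + eLpNorm G2 (ENNReal.ofReal p) μ)
        + eLpNorm (fun _ω : Ω => c' - c) (ENNReal.ofReal p) μ := by
        gcongr
        exact eLpNorm_add_le hmeasG1 hmeasG2 hq1
    _ ≤ e3 + e3 + e3 := by gcongr
    _ ≤ ε := hthirds

end AuxLemmas


/-- Theorem 3.2(a): global law of large numbers under continuous observations:
`(1/t)∫₀ᵗ Y_N(ν)dν → (1/t)∫₀ᵗ E[Ỹ_u(0)]du` in `L^p`. -/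
theorem lln_continuous_observations_global
    {Ω : Type*} [MeasurableSpace Ω] (μ : Measure Ω) [IsProbabilityMeasure μ]
    (Y : ℕ → ℝ → Ω → ℝ) (Ytil : ℝ → ℝ → Ω → ℝ) (p : ℝ)
    (hLSA : IsLSA μ Y Ytil p) :
    ∀ t : ℝ, 0 < t →
      Tendsto (fun N : ℕ =>
          eLpNorm (fun ω =>
              (1 / t) * (∫ ν in (0 : ℝ)..t, Y N ν ω) -
                (1 / t) * ∫ u in (0 : ℝ)..t, (∫ ω', Ytil u 0 ω' ∂μ))
            (ENNReal.ofReal p) μ)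
        atTop (𝓝 0) := by
  intro t ht
  have hp : 1 ≤ p := hLSA.one_le
  have hp0 : 0 < p := by linarith
  have hq1 : (1:ℝ≥0∞) ≤ ENNReal.ofReal p := by rw [ENNReal.one_le_ofReal]; exact hp
  obtain ⟨B, hBt, hBbd⟩ := hLSA.bddLp
  obtain ⟨C, hC, hLip, happrox⟩ := hLSA.approx
  set m : ℝ → ℝ := fun u => ∫ ω', Ytil u 0 ω' ∂μ with hm
  -- shift invariance of the tilde-process norms
  have hYtilLp : ∀ u : ℝ, 0 < u → ∀ s : ℝ,
      eLpNorm (fun ω => Ytil u s ω) (ENNReal.ofReal p) μ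
        = eLpNorm (Ytil u 0) (ENNReal.ofReal p) μ := by
    intro u hu s
    obtain ⟨hXm, T, hT, hXT⟩ := hLSA.statErg u hu
    have hcomp : (fun ω => Ytil u s ω) = (Ytil u 0) ∘ (T s) := funext (hXT s)
    rw [hcomp]
    exact eLpNorm_comp_measurePreserving
      (meas_sec_left (hLSA.measYtil u) 0).aestronglyMeasurable (hT.measurePreserving s)
  -- integrability of the tilde-processes
  have hYtilInt : ∀ u : ℝ, 0 < u → ∀ s : ℝ, Integrable (fun ω => Ytil u s ω) μ := by
    intro u hu s
    refine MemLp.integrable hq1 ?_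
    refine ⟨(meas_sec_left (hLSA.measYtil u) s).aestronglyMeasurable, ?_⟩
    rw [hYtilLp u hu s]
    exact lt_of_le_of_lt (hBbd u hu) hBt
  -- Lipschitz property of the mean function
  have hmLip : ∀ u v : ℝ, 0 < u → 0 < v → |m u - m v| ≤ C * |u - v| := by
    intro u v hu hv
    have h1 : m u - m v = ∫ ω', (Ytil u 0 ω' - Ytil v 0 ω') ∂μ :=
      (integral_sub (hYtilInt u hu 0) (hYtilInt v hv 0)).symm
    rw [h1, ← Real.norm_eq_abs]
    refine le_trans (norm_integral_le_integral_norm _) ?_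
    have h3 : ENNReal.ofReal (∫ ω', ‖Ytil u 0 ω' - Ytil v 0 ω'‖ ∂μ)
        = ∫⁻ ω', (‖Ytil u 0 ω' - Ytil v 0 ω'‖₊ : ℝ≥0∞) ∂μ :=
      ofReal_integral_norm_eq_lintegral_enorm ((hYtilInt u hu 0).sub (hYtilInt v hv 0))
    have h4 : (∫⁻ ω', (‖Ytil u 0 ω' - Ytil v 0 ω'‖₊ : ℝ≥0∞) ∂μ) ≤ ENNReal.ofReal (C * |u - v|) := by
      have h5 : (∫⁻ ω', (‖Ytil u 0 ω' - Ytil v 0 ω'‖₊ : ℝ≥0∞) ∂μ)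
          = eLpNorm (fun ω' => Ytil u 0 ω' - Ytil v 0 ω') 1 μ :=
        (by rw [eLpNorm_one_eq_lintegral_enorm]; rfl)
      rw [h5]
      refine le_trans (eLpNorm_le_eLpNorm_of_exponent_le hq1
        ((meas_sec_left (hLSA.measYtil u) 0).sub
          (meas_sec_left (hLSA.measYtil v) 0)).aestronglyMeasurable) ?_
      exact hLip u v 0 hu hv
    rw [← ENNReal.ofReal_le_ofReal_iff (by positivity), h3]
    exact h4
  have hmBd : ∀ u : ℝ, 0 < u → |m u| ≤ B.toReal := by
    intro u hu
    rw [← Real.norm_eq_abs]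
    refine le_trans (norm_integral_le_integral_norm _) ?_
    have h3 : ENNReal.ofReal (∫ ω', ‖Ytil u 0 ω'‖ ∂μ)
        = ∫⁻ ω', (‖Ytil u 0 ω'‖₊ : ℝ≥0∞) ∂μ :=
      ofReal_integral_norm_eq_lintegral_enorm (hYtilInt u hu 0)
    have h4 : (∫⁻ ω', (‖Ytil u 0 ω'‖₊ : ℝ≥0∞) ∂μ) ≤ B := by
      rw [show (∫⁻ ω', (‖Ytil u 0 ω'‖₊ : ℝ≥0∞) ∂μ) = eLpNorm (Ytil u 0) 1 μ from
        (by rw [eLpNorm_one_eq_lintegral_enorm]; rfl)]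
      exact le_trans (eLpNorm_le_eLpNorm_of_exponent_le hq1
        (meas_sec_left (hLSA.measYtil u) 0).aestronglyMeasurable) (hBbd u hu)
    have h6 : (0:ℝ) ≤ ∫ ω', ‖Ytil u 0 ω'‖ ∂μ := integral_nonneg fun ω' => norm_nonneg _
    rw [← ENNReal.ofReal_le_ofReal_iff ENNReal.toReal_nonneg, h3,
      ENNReal.ofReal_toReal hBt.ne]
    exact h4
  -- m is integrable on (0, t]
  have hmCont : ContinuousOn m (Set.Ioi (0:ℝ)) := by
    refine LipschitzOnWith.continuousOn (K := Real.toNNReal C) ?_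
    refine LipschitzOnWith.of_dist_le_mul fun u hu v hv => ?_
    rw [Real.dist_eq, Real.dist_eq, Real.coe_toNNReal C hC.le]
    exact hmLip u v hu hv
  have hmIntOn : ∀ a b : ℝ, 0 ≤ a → IntegrableOn m (Set.Ioc a b) volume := by
    intro a b ha
    refine Integrable.mono' (integrable_const B.toReal)
      ((hmCont.mono ?_).aestronglyMeasurable measurableSet_Ioc) ?_
    · intro x hx
      simp only [Set.mem_Ioi]
      exact lt_of_le_of_lt ha hx.1
    · filter_upwards [ae_restrict_mem measurableSet_Ioc] with x hx
      rw [Real.norm_eq_abs]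
      exact hmBd x (lt_of_le_of_lt ha hx.1)
  -- ε argument
  rw [ENNReal.tendsto_nhds_zero]
  intro ε hε
  set e4 : ℝ≥0∞ := min (ε/4) 1 with he4
  have he4pos : 0 < e4 := lt_min (ENNReal.div_pos hε.ne' (by norm_num)) one_pos
  have he4t : e4 ≠ ⊤ := (lt_of_le_of_lt (min_le_right _ _) (by norm_num)).ne
  set δe : ℝ := e4.toReal with hδe
  have hδpos : 0 < δe := ENNReal.toReal_pos he4pos.ne' he4t
  have hofδ : ENNReal.ofReal δe = e4 := ENNReal.ofReal_toReal he4t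
  -- choose the partition
  set K : ℕ := ⌈C*t/δe⌉₊ + 1 with hK
  have hK1 : 1 ≤ K := Nat.le_add_left 1 _
  have hKpos : (0:ℝ) < K := by exact_mod_cast hK1
  set Δ : ℝ := t / K with hΔ
  have hΔpos : 0 < Δ := by positivity
  have hCΔ : C * Δ ≤ δe := by
    rw [hΔ]
    rw [mul_div_assoc', div_le_iff₀ hKpos]
    calc C * t ≤ δe * (⌈C*t/δe⌉₊) := by
          rw [← div_le_iff₀' hδpos]
          exact Nat.le_ceil _
      _ ≤ δe * K := by
          rw [hK]
          gcongr
          push_cast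
          linarith
  set a : ℕ → ℝ := fun i => (i:ℝ) * Δ with ha
  set u : ℕ → ℝ := fun i => ((i:ℝ)+1) * Δ with hu
  have hupos : ∀ i : ℕ, 0 < u i := by
    intro i
    rw [hu]
    have : (0:ℝ) ≤ (i:ℝ) := Nat.cast_nonneg i
    simp only []
    nlinarith
  have hat : a K = t := by
    rw [ha, hΔ]
    field_simp
  have ha0 : a 0 = 0 := by simp [ha]
  have hastep : ∀ i : ℕ, a (i+1) - a i = Δ := by
    intro i
    rw [ha]
    push_cast
    ring
  have haui : ∀ i : ℕ, u i = a (i+1) := by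
    intro i
    rw [hu, ha]
    push_cast
    ring
  have hasub : ∀ i : ℕ, i < K → Set.Ioc (a i) (a (i+1)) ⊆ Set.Ioc 0 t := by
    intro i hi ν hν
    constructor
    · refine lt_of_le_of_lt ?_ hν.1
      rw [ha]
      positivity
    · refine le_trans hν.2 ?_
      rw [← hat, ha]
      simp only []
      gcongr
      exact_mod_cast hi
  have hapos : ∀ i : ℕ, 0 ≤ a i := by
    intro i
    rw [ha]
    positivity
  -- ergodic LLN for each partition point
  have hchoice : ∀ i : ℕ, ∃ S : ℝ, 1 ≤ S ∧ ∀ s : ℝ, S ≤ s →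
      eLpNorm (fun ω => s⁻¹ * (∫ r in (0:ℝ)..s, Ytil (u i) r ω) - ∫ ω', Ytil (u i) 0 ω' ∂μ)
        (ENNReal.ofReal p) μ ≤ e4 := by
    intro i
    exact ergodic_lln (hLSA.measYtil (u i)) (hLSA.statErg (u i) (hupos i)) hp
      (lt_of_le_of_lt (hBbd (u i) (hupos i)) hBt) he4pos
  choose S hS1 hS2 using hchoice
  have halei : ∀ i : ℕ, a i ≤ a (i+1) := fun i => by
    have := hastep i; linarith
  -- conditions on N, eventually
  have hev1 : ∀ᶠ N : ℕ in atTop, 1 ≤ N := eventually_ge_atTop 1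
  have hev2 : ∀ᶠ N : ℕ in atTop, C / (N:ℝ) ≤ δe := by
    filter_upwards [eventually_ge_atTop (⌈C/δe⌉₊ + 1)] with N hN
    have hN1 : 1 ≤ N := le_trans (Nat.le_add_left 1 _) hN
    have hN0 : (0:ℝ) < N := by exact_mod_cast hN1
    rw [div_le_iff₀ hN0]
    have h1 : C/δe ≤ (N:ℝ) := by
      refine le_trans (Nat.le_ceil _) ?_
      exact_mod_cast Nat.le_of_succ_le hN
    rw [div_le_iff₀ hδpos] at h1
    nlinarith
  have hev3 : ∀ᶠ N : ℕ in atTop, ∀ i ∈ Finset.range K, S i ≤ (N:ℝ) * Δ := by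
    rw [eventually_all_finset]
    intro i _
    filter_upwards [eventually_ge_atTop (⌈S i / Δ⌉₊)] with N hN
    have h1 : S i / Δ ≤ (N:ℝ) := le_trans (Nat.le_ceil _) (by exact_mod_cast hN)
    rw [div_le_iff₀ hΔpos] at h1
    linarith
  filter_upwards [hev1, hev2, hev3] with N hN1 hN2 hN3
  have hN0 : (0:ℝ) < N := by exact_mod_cast hN1
  -- blockwise averages
  set A1 : ℕ → Ω → ℝ := fun i ω =>
    Δ⁻¹ * ∫ ν in a i..a (i+1), (Y N ν ω - Ytil (u i) ((N:ℝ)*ν) ω) with hA1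
  set A2 : ℕ → Ω → ℝ := fun i ω =>
    Δ⁻¹ * (∫ ν in a i..a (i+1), Ytil (u i) ((N:ℝ)*ν) ω) - m (u i) with hA2
  set A3 : ℕ → ℝ := fun i => m (u i) - Δ⁻¹ * ∫ ν in a i..a (i+1), m ν with hA3
  have hmeasYti : ∀ i : ℕ, Measurable (Function.uncurry fun ν ω => Ytil (u i) ((N:ℝ)*ν) ω) := by
    intro i
    have hm2 : Measurable fun q : ℝ × Ω => ((N:ℝ)*q.1, q.2) :=
      (measurable_fst.const_mul _).prodMk measurable_snd
    exact (hLSA.measYtil (u i)).comp hm2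
  have hYbd : ∀ ν ∈ Set.Ioc (0:ℝ) t, eLpNorm (Y N ν) (ENNReal.ofReal p) μ
      ≤ ENNReal.ofReal C + B := by
    intro ν hν
    have hsplit : Y N ν = (fun ω => Y N ν ω - Ytil ν ((N:ℝ)*ν) ω)
        + fun ω => Ytil ν ((N:ℝ)*ν) ω := by
      funext ω; simp
    rw [hsplit]
    refine le_trans (eLpNorm_add_le
      (((meas_sec_left (hLSA.measY N) ν).sub
        (meas_sec_left (hLSA.measYtil ν) _)).aestronglyMeasurable)
      ((meas_sec_left (hLSA.measYtil ν) _).aestronglyMeasurable) hq1) ?_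
    refine add_le_add ?_ ?_
    · refine le_trans (happrox N ν hN1 hν.1) (ENNReal.ofReal_le_ofReal ?_)
      rw [div_le_iff₀ hN0]
      have h1 : (1:ℝ) ≤ (N:ℝ) := by exact_mod_cast hN1
      nlinarith
    · rw [hYtilLp ν hν.1 ((N:ℝ)*ν)]
      exact hBbd ν hν.1
  have hYae : ∀ᵐ ω ∂μ, IntegrableOn (fun ν => Y N ν ω) (Set.Ioc 0 t) volume :=
    ae_integrableOn_of_bound (hLSA.measY N) hp
      (ENNReal.add_lt_top.2 ⟨ENNReal.ofReal_lt_top, hBt⟩) hYbd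
  have hYtae : ∀ᵐ ω ∂μ, ∀ i : ℕ, i < K →
      IntegrableOn (fun ν => Ytil (u i) ((N:ℝ)*ν) ω) (Set.Ioc (a i) (a (i+1))) volume := by
    rw [ae_all_iff]
    intro i
    rcases lt_or_ge i K with hi | hi
    · have hbd : ∀ ν ∈ Set.Ioc (a i) (a (i+1)),
          eLpNorm (fun ω => Ytil (u i) ((N:ℝ)*ν) ω) (ENNReal.ofReal p) μ ≤ B := by
        intro ν _
        rw [hYtilLp (u i) (hupos i) _]
        exact hBbd _ (hupos i)
      filter_upwards [ae_integrableOn_of_bound (hmeasYti i) hp hBt hbd] with ω hω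
      exact fun _ => hω
    · exact Eventually.of_forall fun ω hlt => absurd hlt (not_lt.2 hi)
  -- a.e. decomposition of the target
  have hsplit : (fun ω => (1/t) * (∫ ν in (0:ℝ)..t, Y N ν ω) - (1/t) * ∫ ν in (0:ℝ)..t, m ν)
      =ᵐ[μ] fun ω => ∑ i ∈ Finset.range K, (Δ/t) * (A1 i ω + A2 i ω + A3 i) := by
    filter_upwards [hYae, hYtae] with ω hω1 hω2
    have hYii : ∀ i < K, IntervalIntegrable (fun ν => Y N ν ω) volume (a i) (a (i+1)) := by
      intro i hi
      rw [intervalIntegrable_iff, Set.uIoc_of_le (halei i)]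
      exact hω1.mono_set (hasub i hi)
    have hTii : ∀ i < K, IntervalIntegrable (fun ν => Ytil (u i) ((N:ℝ)*ν) ω) volume
        (a i) (a (i+1)) := by
      intro i hi
      rw [intervalIntegrable_iff, Set.uIoc_of_le (halei i)]
      exact hω2 i hi
    have hmii : ∀ i : ℕ, IntervalIntegrable m volume (a i) (a (i+1)) := by
      intro i
      rw [intervalIntegrable_iff, Set.uIoc_of_le (halei i)]
      exact hmIntOn (a i) (a (i+1)) (hapos i)
    have hYsum : ∑ i ∈ Finset.range K, ∫ ν in a i..a (i+1), Y N ν ω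
        = ∫ ν in (0:ℝ)..t, Y N ν ω := by
      have h := intervalIntegral.sum_integral_adjacent_intervals (a := a) (n := K)
        (f := fun ν => Y N ν ω) (μ := volume) hYii
      rwa [ha0, hat] at h
    have hmsum : ∑ i ∈ Finset.range K, ∫ ν in a i..a (i+1), m ν
        = ∫ ν in (0:ℝ)..t, m ν := by
      have h := intervalIntegral.sum_integral_adjacent_intervals (a := a) (n := K)
        (f := m) (μ := volume) (fun i _ => hmii i)
      rwa [ha0, hat] at h
    rw [← hYsum, ← hmsum, Finset.mul_sum, Finset.mul_sum, ← Finset.sum_sub_distrib]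
    refine Finset.sum_congr rfl fun i hi => ?_
    have hiK := Finset.mem_range.1 hi
    have h1 : ∫ ν in a i..a (i+1), (Y N ν ω - Ytil (u i) ((N:ℝ)*ν) ω)
        = (∫ ν in a i..a (i+1), Y N ν ω) - ∫ ν in a i..a (i+1), Ytil (u i) ((N:ℝ)*ν) ω :=
      intervalIntegral.integral_sub (hYii i hiK) (hTii i hiK)
    have hΔne : Δ ≠ 0 := hΔpos.ne'
    have htne : t ≠ 0 := ht.ne'
    simp only [hA1, hA2, hA3]
    rw [h1]
    field_simp
    ring
  -- norm bounds on the three blockwise terms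
  have habsub : ∀ i : ℕ, ∀ ν ∈ Set.Ioc (a i) (a (i+1)), |ν - u i| ≤ Δ := by
    intro i ν hν
    have h1 := hastep i
    have h2 := haui i
    rw [abs_le]
    constructor
    · linarith [hν.1]
    · linarith [hν.2]
  have hA1bd : ∀ i : ℕ, i < K → eLpNorm (A1 i) (ENNReal.ofReal p) μ ≤ e4 + e4 := by
    intro i hiK
    have hbdν : ∀ ν ∈ Set.Ioc (a i) (a (i+1)),
        eLpNorm (fun ω => Y N ν ω - Ytil (u i) ((N:ℝ)*ν) ω) (ENNReal.ofReal p) μ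
          ≤ ENNReal.ofReal (C/(N:ℝ)) + ENNReal.ofReal (C*Δ) := by
      intro ν hν
      have hν0 : 0 < ν := (hasub i hiK hν).1
      have hsplit2 : (fun ω => Y N ν ω - Ytil (u i) ((N:ℝ)*ν) ω)
          = (fun ω => Y N ν ω - Ytil ν ((N:ℝ)*ν) ω)
            + fun ω => Ytil ν ((N:ℝ)*ν) ω - Ytil (u i) ((N:ℝ)*ν) ω := by
        funext ω; simp
      rw [hsplit2]
      refine le_trans (eLpNorm_add_le
        (((meas_sec_left (hLSA.measY N) ν).sub
          (meas_sec_left (hLSA.measYtil ν) _)).aestronglyMeasurable)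
        (((meas_sec_left (hLSA.measYtil ν) _).sub
          (meas_sec_left (hLSA.measYtil (u i)) _)).aestronglyMeasurable) hq1) ?_
      refine add_le_add (happrox N ν hN1 hν0) ?_
      refine le_trans (hLip ν (u i) ((N:ℝ)*ν) hν0 (hupos i)) (ENNReal.ofReal_le_ofReal ?_)
      exact mul_le_mul_of_nonneg_left (habsub i ν hν) hC.le
    have h := avg_eLpNorm_le (μ := μ) hp
      (f := fun ν ω => Y N ν ω - Ytil (u i) ((N:ℝ)*ν) ω)
      (by exact (hLSA.measY N).sub (hmeasYti i))
      (by linarith [hastep i, hΔpos] : a i < a (i+1)) hbdν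
    have hgoal : A1 i = fun ω => (a (i+1) - a i)⁻¹ *
        ∫ ν in a i..a (i+1), (Y N ν ω - Ytil (u i) ((N:ℝ)*ν) ω) := by
      funext ω
      rw [hA1]
      simp only [hastep i]
    rw [hgoal]
    refine le_trans h (add_le_add ?_ ?_)
    · rw [← hofδ]; exact ENNReal.ofReal_le_ofReal hN2
    · rw [← hofδ]; exact ENNReal.ofReal_le_ofReal hCΔ
  have hA2bd : ∀ i : ℕ, i < K → eLpNorm (A2 i) (ENNReal.ofReal p) μ ≤ e4 := by
    intro i hiK
    obtain ⟨hXm, T, hT, hXT⟩ := hLSA.statErg (u i) (hupos i)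
    set GG : Ω → ℝ := fun ω' =>
      ((N:ℝ)*Δ)⁻¹ * (∫ r in (0:ℝ)..(N:ℝ)*Δ, Ytil (u i) r ω') - m (u i) with hGG
    have hGmeas : Measurable GG :=
      ((meas_param_integral (hLSA.measYtil (u i)) 0 _).const_mul _).sub measurable_const
    have hcompid : ∀ ω, A2 i ω = GG (T ((N:ℝ) * (a i)) ω) := by
      intro ω
      have hai1 : a (i+1) = a i + Δ := by linarith [hastep i]
      have s1 : ∫ ν in a i..a (i+1), Ytil (u i) ((N:ℝ)*ν) ω
          = (N:ℝ)⁻¹ • ∫ r in (N:ℝ)*(a i)..(N:ℝ)*(a (i+1)), Ytil (u i) r ω :=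
        intervalIntegral.integral_comp_mul_left (fun r => Ytil (u i) r ω) hN0.ne'
      have s2 : ∫ r in (0:ℝ)..(N:ℝ)*Δ, Ytil (u i) (r + (N:ℝ)*(a i)) ω
          = ∫ r in (0:ℝ)+(N:ℝ)*(a i)..(N:ℝ)*Δ+(N:ℝ)*(a i), Ytil (u i) r ω :=
        intervalIntegral.integral_comp_add_right (fun r => Ytil (u i) r ω) _
      have s3 : (0:ℝ)+(N:ℝ)*(a i) = (N:ℝ)*(a i) := by ring
      have s4 : (N:ℝ)*Δ+(N:ℝ)*(a i) = (N:ℝ)*(a (i+1)) := by rw [hai1]; ring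
      have s5 : ∀ r : ℝ, Ytil (u i) (r + (N:ℝ)*(a i)) ω
          = Ytil (u i) r (T ((N:ℝ)*(a i)) ω) := by
        intro r
        rw [hXT (r + (N:ℝ)*(a i)) ω, hXT r (T ((N:ℝ)*(a i)) ω), hT.flow]
      simp only [hA2, hGG]
      congr 1
      calc Δ⁻¹ * ∫ ν in a i..a (i+1), Ytil (u i) ((N:ℝ)*ν) ω
          = Δ⁻¹ * ((N:ℝ)⁻¹ * ∫ r in (N:ℝ)*(a i)..(N:ℝ)*(a (i+1)), Ytil (u i) r ω) := by
            rw [s1, smul_eq_mul]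
        _ = ((N:ℝ)*Δ)⁻¹ * ∫ r in (N:ℝ)*(a i)..(N:ℝ)*(a (i+1)), Ytil (u i) r ω := by
            rw [mul_inv]; ring
        _ = ((N:ℝ)*Δ)⁻¹ * ∫ r in (0:ℝ)..(N:ℝ)*Δ, Ytil (u i) (r + (N:ℝ)*(a i)) ω := by
            rw [s2, s3, s4]
        _ = ((N:ℝ)*Δ)⁻¹ * ∫ r in (0:ℝ)..(N:ℝ)*Δ, Ytil (u i) r (T ((N:ℝ)*(a i)) ω) := by
            simp only [s5]
    have heq : eLpNorm (A2 i) (ENNReal.ofReal p) μ = eLpNorm GG (ENNReal.ofReal p) μ := by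
      rw [show A2 i = GG ∘ (T ((N:ℝ)*(a i))) from funext hcompid]
      exact eLpNorm_comp_measurePreserving hGmeas.aestronglyMeasurable
        (hT.measurePreserving _)
    rw [heq]
    exact hS2 i ((N:ℝ)*Δ) (hN3 i (Finset.mem_range.2 hiK))
  have hA3bd : ∀ i : ℕ, |A3 i| ≤ C * Δ := by
    intro i
    have hmi : IntervalIntegrable m volume (a i) (a (i+1)) := by
      rw [intervalIntegrable_iff, Set.uIoc_of_le (halei i)]
      exact hmIntOn (a i) (a (i+1)) (hapos i)
    have h1 : A3 i = Δ⁻¹ * ∫ ν in a i..a (i+1), (m (u i) - m ν) := by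
      simp only [hA3]
      rw [intervalIntegral.integral_sub intervalIntegrable_const hmi,
        intervalIntegral.integral_const, hastep i]
      field_simp
      ring
    rw [h1, abs_mul, abs_of_nonneg (inv_nonneg.2 hΔpos.le)]
    have h2 : |∫ ν in a i..a (i+1), (m (u i) - m ν)| ≤ (C*Δ) * |a (i+1) - a i| := by
      have h3 := intervalIntegral.norm_integral_le_of_norm_le_const (C := C*Δ)
        (f := fun ν => m (u i) - m ν) (a := a i) (b := a (i+1)) ?_
      · rwa [Real.norm_eq_abs] at h3
      · intro ν hν
        rw [Set.uIoc_of_le (halei i)] at hν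
        rw [Real.norm_eq_abs]
        have hν0 : 0 < ν := lt_of_le_of_lt (hapos i) hν.1
        refine le_trans (hmLip (u i) ν (hupos i) hν0) ?_
        rw [abs_sub_comm]
        exact mul_le_mul_of_nonneg_left (habsub i ν hν) hC.le
    rw [hastep i, abs_of_nonneg hΔpos.le] at h2
    calc Δ⁻¹ * |∫ ν in a i..a (i+1), (m (u i) - m ν)| ≤ Δ⁻¹ * ((C*Δ)*Δ) := by gcongr
      _ = C*Δ := by field_simp
  have hA1m : ∀ i : ℕ, Measurable (A1 i) := fun i =>
    (meas_param_integral (f := fun ν ω => Y N ν ω - Ytil (u i) ((N:ℝ)*ν) ω)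
      (by exact (hLSA.measY N).sub (hmeasYti i)) _ _).const_mul _
  have hA2m : ∀ i : ℕ, Measurable (A2 i) := fun i =>
    ((meas_param_integral (hmeasYti i) _ _).const_mul _).sub measurable_const
  have hterm : ∀ i ∈ Finset.range K,
      eLpNorm (fun ω => (Δ/t) * (A1 i ω + A2 i ω + A3 i)) (ENNReal.ofReal p) μ
        ≤ ENNReal.ofReal (Δ/t) * (4 * e4) := by
    intro i hi
    have hiK := Finset.mem_range.1 hi
    have hsm : (fun ω => (Δ/t) * (A1 i ω + A2 i ω + A3 i))
        = (Δ/t) • fun ω => A1 i ω + A2 i ω + A3 i := rfl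
    rw [hsm, eLpNorm_const_smul]
    have hnn : (‖Δ/t‖₊ : ℝ≥0∞) = ENNReal.ofReal (Δ/t) := by
      rw [← enorm_eq_nnnorm, ← ofReal_norm, Real.norm_eq_abs, abs_of_nonneg (by positivity)]
    rw [enorm_eq_nnnorm, hnn]
    gcongr
    calc eLpNorm (fun ω => A1 i ω + A2 i ω + A3 i) (ENNReal.ofReal p) μ
        ≤ eLpNorm (fun ω => A1 i ω + A2 i ω) (ENNReal.ofReal p) μ
          + eLpNorm (fun _ω : Ω => A3 i) (ENNReal.ofReal p) μ :=
          eLpNorm_add_le (((hA1m i).add (hA2m i)).aestronglyMeasurable)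
            aestronglyMeasurable_const hq1
      _ ≤ (eLpNorm (A1 i) (ENNReal.ofReal p) μ + eLpNorm (A2 i) (ENNReal.ofReal p) μ)
          + eLpNorm (fun _ω : Ω => A3 i) (ENNReal.ofReal p) μ := by
          gcongr
          exact eLpNorm_add_le (hA1m i).aestronglyMeasurable (hA2m i).aestronglyMeasurable hq1
      _ ≤ ((e4 + e4) + e4) + e4 := by
          refine add_le_add (add_le_add (hA1bd i hiK) (hA2bd i hiK)) ?_
          have h := eLpNorm_le_of_ae_bound (μ := μ) (p := ENNReal.ofReal p)
            (f := fun _ω : Ω => A3 i) (C := C*Δ)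
            (Eventually.of_forall fun ω => by rw [Real.norm_eq_abs]; exact hA3bd i)
          refine le_trans (by simpa [measure_univ] using h) ?_
          rw [← hofδ]
          exact ENNReal.ofReal_le_ofReal hCΔ
      _ = 4 * e4 := by ring
  have hsumfun : (fun ω => ∑ i ∈ Finset.range K, (Δ/t) * (A1 i ω + A2 i ω + A3 i))
      = ∑ i ∈ Finset.range K, fun ω => (Δ/t) * (A1 i ω + A2 i ω + A3 i) := by
    funext ω
    rw [Finset.sum_apply]
  calc eLpNorm (fun ω => (1/t) * (∫ ν in (0:ℝ)..t, Y N ν ω)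
          - (1/t) * ∫ ν in (0:ℝ)..t, m ν) (ENNReal.ofReal p) μ
      = eLpNorm (fun ω => ∑ i ∈ Finset.range K, (Δ/t) * (A1 i ω + A2 i ω + A3 i))
          (ENNReal.ofReal p) μ := eLpNorm_congr_ae hsplit
    _ ≤ ∑ i ∈ Finset.range K, eLpNorm (fun ω => (Δ/t) * (A1 i ω + A2 i ω + A3 i))
          (ENNReal.ofReal p) μ := by
        rw [hsumfun]
        exact eLpNorm_sum_le (fun i _ =>
          ((((hA1m i).add (hA2m i)).add_const _).const_mul _).aestronglyMeasurable) hq1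
    _ ≤ ∑ _i ∈ Finset.range K, ENNReal.ofReal (Δ/t) * (4 * e4) :=
        Finset.sum_le_sum hterm
    _ = (K : ℝ≥0∞) * (ENNReal.ofReal (Δ/t) * (4 * e4)) := by
        rw [Finset.sum_const, Finset.card_range, nsmul_eq_mul]
    _ = (ENNReal.ofReal ((K:ℝ) * (Δ/t))) * (4 * e4) := by
        rw [ENNReal.ofReal_mul (Nat.cast_nonneg K), ENNReal.ofReal_natCast, mul_assoc]
    _ = 4 * e4 := by
        have : (K:ℝ) * (Δ/t) = 1 := by
          rw [hΔ]
          field_simp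
        rw [this, ENNReal.ofReal_one, one_mul]
    _ ≤ 4 * (ε/4) := by
        gcongr
        exact min_le_left _ _
    _ = ε := ENNReal.mul_div_cancel' (by norm_num) (by norm_num)
end

section
/- Let a: ℝ → ℝ be Lipschitz continuous with Lipschitz constant L and suppose ε := inf_{s∈ℝ} a(s) > 0. Then there exists a constant C > 0, depending only on L and ε, such that for all t ∈ ℝ and all N ∈ ℕ: ∫_0^∞ (e^{−∫_{−s}^0 a(τ/N + t) dτ} − e^{−a(t)s})² ds ≤ C/N². -/
open MeasureTheory Set Real

/-- The map `u ↦ e^{-u}` is 1-Lipschitz on `[0, ∞)`. -/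
lemma exp_neg_contraction {u v : ℝ} (hu : 0 ≤ u) (hv : 0 ≤ v) :
    |Real.exp (-u) - Real.exp (-v)| ≤ |u - v| := by
  wlog h : u ≤ v generalizing u v
  · rw [abs_sub_comm, abs_sub_comm u v]; exact this hv hu (le_of_not_ge h)
  have h1 : Real.exp (-u) - Real.exp (-v) = Real.exp (-u) * (1 - Real.exp (-(v - u))) := by
    rw [mul_sub, mul_one, ← Real.exp_add]; ring_nf
  have h2 : 1 - Real.exp (-(v - u)) ≤ v - u := by
    have := Real.add_one_le_exp (-(v - u)); linarith
  have h3 : 0 ≤ 1 - Real.exp (-(v - u)) := by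
    have : Real.exp (-(v - u)) ≤ 1 := Real.exp_le_one_iff.mpr (by linarith)
    linarith
  have h4 : Real.exp (-u) ≤ 1 := Real.exp_le_one_iff.mpr (by linarith)
  rw [h1, abs_of_nonneg (by positivity), abs_sub_comm, abs_of_nonneg (by linarith : (0:ℝ) ≤ v - u)]
  calc Real.exp (-u) * (1 - Real.exp (-(v - u))) ≤ 1 * (v - u) :=
        mul_le_mul h4 h2 h3 zero_le_one
    _ = v - u := one_mul _

/-- Kernel estimate from the proof of Proposition 5.2: if `a` is Lipschitz with
constant `L` and `ε := inf_s a(s) > 0`, then there is a constant `C > 0`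
(depending only on `L` and `ε`) with
`∫₀^∞ (e^{-∫_{-s}^0 a(τ/N + t)dτ} - e^{-a(t)s})² ds ≤ C/N²` for all `t` and `N`. -/
theorem tv_ou_kernel_approximation_rate
    (a : ℝ → ℝ) (L : ℝ) (hL : 0 ≤ L) (ha : LipschitzWith L.toNNReal a)
    (ε : ℝ) (hεdef : ε = ⨅ s : ℝ, a s) (hε : 0 < ε) :
    ∃ C : ℝ, 0 < C ∧ ∀ (t : ℝ) (N : ℕ), 1 ≤ N →
      (∫ s in Set.Ioi (0 : ℝ),
          (Real.exp (-(∫ τ in (-s)..(0 : ℝ), a (τ / (N : ℝ) + t))) -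
            Real.exp (-(a t * s))) ^ 2) ≤
        C / (N : ℝ) ^ 2 := by
  -- `a` is bounded below and `ε ≤ a x` for all `x`
  have hbdd : BddBelow (Set.range a) := by
    by_contra h
    rw [Real.iInf_of_not_bddBelow h] at hεdef
    linarith
  have hεle : ∀ x, ε ≤ a x := fun x => hεdef ▸ ciInf_le hbdd x
  have haL : ∀ x y, |a x - a y| ≤ L * |x - y| := by
    intro x y
    have := ha.dist_le_mul x y
    rwa [Real.dist_eq, Real.dist_eq, Real.coe_toNNReal L hL] at this
  have hacont : Continuous a := ha.continuous
  -- the dominating integral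
  set φ : ℝ → ℝ := fun s => s ^ 4 * Real.exp (-(2 * ε) * s) with hφ
  have hφint : IntegrableOn φ (Ioi 0) := by
    have h := integrableOn_rpow_mul_exp_neg_mul_rpow (p := 1) (s := 4) (b := 2 * ε)
      (by norm_num) zero_lt_one (by linarith)
    refine (h.congr_fun (fun x hx => ?_) measurableSet_Ioi)
    have hx0 : (0:ℝ) < x := hx
    simp only [Real.rpow_one]
    have h1 : x ^ (1:ℝ) = x := Real.rpow_one x
    have h4 : x ^ (4:ℝ) = x ^ (4:ℕ) := by
      rw [← Real.rpow_natCast x 4]; norm_num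
    simp only [hφ, h1, h4]
  set J : ℝ := ∫ s in Ioi (0:ℝ), φ s with hJ
  have hJ0 : 0 ≤ J := setIntegral_nonneg measurableSet_Ioi (fun s hs => by positivity)
  refine ⟨L ^ 2 / 4 * J + 1, by positivity, fun t N hN => ?_⟩
  have hNr : (1:ℝ) ≤ (N:ℝ) := by exact_mod_cast hN
  have hNr0 : (0:ℝ) < (N:ℝ) := by linarith
  -- pointwise bound
  have key : ∀ s ∈ Ioi (0:ℝ),
      (Real.exp (-(∫ τ in (-s)..(0:ℝ), a (τ / (N:ℝ) + t))) - Real.exp (-(a t * s))) ^ 2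
        ≤ L ^ 2 / (4 * (N:ℝ) ^ 2) * φ s := by
    intro s hs
    have hs0 : (0:ℝ) < s := hs
    set I : ℝ := ∫ τ in (-s)..(0:ℝ), a (τ / (N:ℝ) + t) with hI
    have hcont : Continuous (fun τ : ℝ => a (τ / (N:ℝ) + t)) := by
      exact hacont.comp (by continuity)
    have hii : IntervalIntegrable (fun τ : ℝ => a (τ / (N:ℝ) + t)) volume (-s) 0 :=
      hcont.intervalIntegrable _ _
    -- |I - a t * s| ≤ L * s^2 / (2 N)
    have h1 : |I - a t * s| ≤ L * s ^ 2 / (2 * (N:ℝ)) := by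
      have hconst : (∫ _ in (-s)..(0:ℝ), a t) = a t * s := by
        rw [intervalIntegral.integral_const]; simp [mul_comm]
      have hsub : I - a t * s = ∫ τ in (-s)..(0:ℝ), (a (τ / (N:ℝ) + t) - a t) := by
        rw [intervalIntegral.integral_sub hii (intervalIntegrable_const), hconst]
      rw [hsub]
      have habs : |∫ τ in (-s)..(0:ℝ), (a (τ / (N:ℝ) + t) - a t)|
          ≤ ∫ τ in (-s)..(0:ℝ), |a (τ / (N:ℝ) + t) - a t| :=
        intervalIntegral.abs_integral_le_integral_abs (by linarith)
      have hmono : (∫ τ in (-s)..(0:ℝ), |a (τ / (N:ℝ) + t) - a t|)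
          ≤ ∫ τ in (-s)..(0:ℝ), L / (N:ℝ) * (-τ) := by
        refine intervalIntegral.integral_mono_on (by linarith)
          ((hcont.sub continuous_const).abs.intervalIntegrable _ _)
          ((by continuity : Continuous fun τ : ℝ => L / (N:ℝ) * (-τ)).intervalIntegrable _ _)
          (fun τ hτ => ?_)
        have hτ0 : τ ≤ 0 := hτ.2
        calc |a (τ / (N:ℝ) + t) - a t| ≤ L * |τ / (N:ℝ) + t - t| := haL _ _
          _ = L / (N:ℝ) * (-τ) := by
              rw [add_sub_cancel_right, abs_div, abs_of_nonneg hNr0.le,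
                abs_of_nonpos hτ0]; ring
      have hval : (∫ τ in (-s)..(0:ℝ), L / (N:ℝ) * (-τ)) = L * s ^ 2 / (2 * (N:ℝ)) := by
        have hneg : (∫ x in (-s)..(0:ℝ), -x) = s ^ 2 / 2 := by
          rw [intervalIntegral.integral_neg (f := fun x : ℝ => x), integral_id]
          ring
        rw [intervalIntegral.integral_const_mul, hneg, div_mul_div_comm,
          mul_comm ((N:ℝ)) 2]
      calc |∫ τ in (-s)..(0:ℝ), (a (τ / (N:ℝ) + t) - a t)| ≤ _ := habs
        _ ≤ _ := hmono
        _ = L * s ^ 2 / (2 * (N:ℝ)) := hval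
    -- lower bounds
    have h2 : ε * s ≤ I := by
      have : (∫ _ in (-s)..(0:ℝ), ε) ≤ I := by
        refine intervalIntegral.integral_mono_on (by linarith)
          (intervalIntegrable_const) hii (fun τ _ => hεle _)
      rwa [intervalIntegral.integral_const, sub_neg_eq_add, zero_add, smul_eq_mul,
        mul_comm] at this
    have h3 : ε * s ≤ a t * s := mul_le_mul_of_nonneg_right (hεle t) hs0.le
    have hεs0 : 0 ≤ ε * s := by positivity
    -- exponential contraction
    have h4 : |Real.exp (-I) - Real.exp (-(a t * s))|
        ≤ Real.exp (-(ε * s)) * |I - a t * s| := by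
      have e1 : Real.exp (-I) = Real.exp (-(ε * s)) * Real.exp (-(I - ε * s)) := by
        rw [← Real.exp_add]; ring_nf
      have e2 : Real.exp (-(a t * s)) =
          Real.exp (-(ε * s)) * Real.exp (-(a t * s - ε * s)) := by
        rw [← Real.exp_add]; ring_nf
      rw [e1, e2, ← mul_sub, abs_mul, abs_of_nonneg (Real.exp_pos _).le]
      refine mul_le_mul_of_nonneg_left ?_ (Real.exp_pos _).le
      have := exp_neg_contraction (by linarith : 0 ≤ I - ε * s)
        (by linarith : 0 ≤ a t * s - ε * s)
      simpa using this
    have h5 : |Real.exp (-I) - Real.exp (-(a t * s))|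
        ≤ Real.exp (-(ε * s)) * (L * s ^ 2 / (2 * (N:ℝ))) := by
      refine h4.trans (mul_le_mul_of_nonneg_left h1 (Real.exp_pos _).le)
    calc (Real.exp (-I) - Real.exp (-(a t * s))) ^ 2
        = |Real.exp (-I) - Real.exp (-(a t * s))| ^ 2 := (sq_abs _).symm
      _ ≤ (Real.exp (-(ε * s)) * (L * s ^ 2 / (2 * (N:ℝ)))) ^ 2 := by
          exact pow_le_pow_left₀ (abs_nonneg _) h5 2
      _ = L ^ 2 / (4 * (N:ℝ) ^ 2) * φ s := by
          rw [hφ]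
          rw [mul_pow, ← Real.exp_nat_mul]
          rw [show ((2:ℕ) : ℝ) * -(ε * s) = -(2 * ε) * s by ring]
          ring
  -- integrate the pointwise bound
  have hgi : IntegrableOn (fun s => L ^ 2 / (4 * (N:ℝ) ^ 2) * φ s) (Ioi 0) :=
    hφint.const_mul _
  have hmono := integral_mono_of_nonneg
    (f := fun s => (Real.exp (-(∫ τ in (-s)..(0:ℝ), a (τ / (N:ℝ) + t))) -
        Real.exp (-(a t * s))) ^ 2)
    (g := fun s => L ^ 2 / (4 * (N:ℝ) ^ 2) * φ s)
    (μ := volume.restrict (Ioi 0))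
    (Filter.Eventually.of_forall (fun s => by positivity)) hgi
    ((ae_restrict_iff' measurableSet_Ioi).mpr (Filter.Eventually.of_forall key))
  have hgval : (∫ s in Ioi (0:ℝ), L ^ 2 / (4 * (N:ℝ) ^ 2) * φ s)
      = L ^ 2 / (4 * (N:ℝ) ^ 2) * J := integral_const_mul _ _
  calc (∫ s in Ioi (0:ℝ), (Real.exp (-(∫ τ in (-s)..(0:ℝ), a (τ / (N:ℝ) + t))) -
        Real.exp (-(a t * s))) ^ 2)
      ≤ L ^ 2 / (4 * (N:ℝ) ^ 2) * J := hmono.trans_eq hgval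
    _ = (L ^ 2 / 4 * J) / (N:ℝ) ^ 2 := by
        field_simp
    _ ≤ (L ^ 2 / 4 * J + 1) / (N:ℝ) ^ 2 := by
        gcongr
        linarith
end

section
/- Let p ∈ ℕ, let A: ℝ → M_p(ℝ) be a Lipschitz continuous matrix-valued function with Lipschitz constant L_A (with respect to the spectral norm), let t ∈ ℝ, N ∈ ℕ, s < 0, and suppose there exist γ, γ̃, λ, λ̃ > 0 such that ‖exp(ν·∫_s^0 A(τ/N + t) dτ)‖ ≤ γ·e^{νλs} and ‖exp(−ν·A(t)·s)‖ ≤ γ̃·e^{νλ̃s} for all ν ∈ [0,1]. Then, with λ̂ := min(λ, λ̃): ‖exp(∫_s^0 A(τ/N + t) dτ) − exp(−A(t)·s)‖ ≤ (L_A·γ·γ̃ / (2N)) · s² · e^{λ̂ s}. -/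
open scoped Matrix.Norms.L2Operator NNReal

noncomputable section

set_option maxHeartbeats 1000000 in
/-- Matrix exponential estimate from the proof of Corollary 5.7: under uniform
exponential bounds on `exp(ν∫_s^0 A(τ/N + t)dτ)` and `exp(-νA(t)s)`, the
difference of the two matrix exponentials (in spectral norm) is bounded by
`(L_A γ γ̃ / (2N)) s² e^{λ̂ s}` with `λ̂ = min(λ, λ̃)`. -/
theorem matrix_exp_difference_bound
    (p : ℕ) (A : ℝ → Matrix (Fin p) (Fin p) ℝ)
    (LA : ℝ≥0) (hA : LipschitzWith LA A)
    (t : ℝ) (N : ℕ) (hN : 1 ≤ N) (s : ℝ) (hs : s < 0)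
    (γ γ' lam lam' : ℝ) (hγ : 0 < γ) (hγ' : 0 < γ')
    (hlam : 0 < lam) (hlam' : 0 < lam')
    (h1 : ∀ ν : ℝ, ν ∈ Set.Icc (0 : ℝ) 1 →
      ‖NormedSpace.exp (ν • ∫ τ in s..(0 : ℝ), A (τ / (N : ℝ) + t))‖ ≤
        γ * Real.exp (ν * lam * s))
    (h2 : ∀ ν : ℝ, ν ∈ Set.Icc (0 : ℝ) 1 →
      ‖NormedSpace.exp ((-(ν * s)) • A t)‖ ≤ γ' * Real.exp (ν * lam' * s)) :
    ‖NormedSpace.exp (∫ τ in s..(0 : ℝ), A (τ / (N : ℝ) + t)) -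
        NormedSpace.exp ((-s) • A t)‖ ≤
      (LA : ℝ) * γ * γ' / (2 * (N : ℝ)) * s ^ 2 * Real.exp (min lam lam' * s) := by
  have hNpos : (0:ℝ) < N := by exact_mod_cast hN
  set X : Matrix (Fin p) (Fin p) ℝ := ∫ τ in s..(0 : ℝ), A (τ / (N : ℝ) + t) with hX
  set Y : Matrix (Fin p) (Fin p) ℝ := (-s) • A t with hY
  have hAcont : Continuous A := hA.continuous
  -- step 1 : ‖X - Y‖ ≤ LA * s^2 / (2N)
  have hXY : X - Y = ∫ τ in s..(0:ℝ), (A (τ / (N : ℝ) + t) - A t) := by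
    rw [intervalIntegral.integral_sub, intervalIntegral.integral_const]
    · simp [hY, hX]
    · exact (hAcont.comp (by continuity)).intervalIntegrable _ _
    · exact intervalIntegrable_const
  have hD : ‖X - Y‖ ≤ (LA : ℝ) * s ^ 2 / (2 * N) := by
    rw [hXY]
    have hb1 : ‖∫ τ in s..(0:ℝ), (A (τ / (N : ℝ) + t) - A t)‖ ≤
        ∫ τ in s..(0:ℝ), ‖A (τ / (N : ℝ) + t) - A t‖ :=
      intervalIntegral.norm_integral_le_integral_norm hs.le
    have hb2 : (∫ τ in s..(0:ℝ), ‖A (τ / (N : ℝ) + t) - A t‖) ≤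
        ∫ τ in s..(0:ℝ), (LA : ℝ) * (-τ) / N := by
      apply intervalIntegral.integral_mono_on hs.le
      · exact ((hAcont.comp (by continuity)).sub continuous_const).norm.intervalIntegrable _ _
      · exact (Continuous.intervalIntegrable (by continuity) _ _)
      · intro τ hτ
        have hd := hA.dist_le_mul (τ / (N : ℝ) + t) t
        rw [dist_eq_norm, dist_eq_norm] at hd
        have h3 : (τ / (N : ℝ) + t) - t = τ / N := by ring
        rw [h3] at hd
        refine hd.trans ?_
        have habs : ‖τ / (N:ℝ)‖ = -τ / N := by
          rw [Real.norm_eq_abs, abs_div, abs_of_nonpos hτ.2, abs_of_pos hNpos]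
        rw [habs, mul_div_assoc]
    have hb3 : (∫ τ in s..(0:ℝ), (LA : ℝ) * (-τ) / N) = (LA : ℝ) * s ^ 2 / (2 * N) := by
      have : ∀ τ : ℝ, (LA : ℝ) * (-τ) / N = ((LA : ℝ) / N) * (-τ) := by
        intro τ; ring
      simp_rw [this]
      rw [intervalIntegral.integral_const_mul, intervalIntegral.integral_neg,
        integral_id]
      ring
    linarith
  -- step 2 : derivative identity
  set F : ℝ → Matrix (Fin p) (Fin p) ℝ :=
    fun ν => NormedSpace.exp (ν • Y) * NormedSpace.exp ((1 - ν) • X) with hF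
  set F' : ℝ → Matrix (Fin p) (Fin p) ℝ :=
    fun ν => NormedSpace.exp (ν • Y) * (Y - X) * NormedSpace.exp ((1 - ν) • X) with hF'
  have hderiv : ∀ ν : ℝ, HasDerivAt F (F' ν) ν := by
    intro ν
    have hf : HasDerivAt (fun u : ℝ => NormedSpace.exp (u • Y))
        (NormedSpace.exp (ν • Y) * Y) ν := hasDerivAt_exp_smul_const Y ν
    have hg0 : HasDerivAt (fun u : ℝ => NormedSpace.exp (u • X))
        (X * NormedSpace.exp ((1 - ν) • X)) (1 - ν) := hasDerivAt_exp_smul_const' X (1 - ν)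
    have hlin : HasDerivAt (fun u : ℝ => 1 - u) (-1 : ℝ) ν := by
      simpa using (hasDerivAt_id ν).const_sub 1
    have hg : HasDerivAt (fun u : ℝ => NormedSpace.exp ((1 - u) • X))
        ((-1 : ℝ) • (X * NormedSpace.exp ((1 - ν) • X))) ν :=
      HasDerivAt.scomp ν hg0 hlin
    have := hf.mul hg
    have hEq : NormedSpace.exp (ν • Y) * Y * NormedSpace.exp ((1 - ν) • X) +
        NormedSpace.exp (ν • Y) * ((-1 : ℝ) • (X * NormedSpace.exp ((1 - ν) • X))) = F' ν := by
      simp only [hF', neg_one_smul, mul_neg, mul_sub, sub_mul, mul_assoc]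
      abel
    exact hEq ▸ this
  have hF'cont : Continuous F' := by
    have he : Continuous (NormedSpace.exp : Matrix (Fin p) (Fin p) ℝ → _) := by
      letI : NormedAlgebra ℚ (Matrix (Fin p) (Fin p) ℝ) := NormedAlgebra.restrictScalars ℚ ℝ _
      exact NormedSpace.exp_continuous
    exact ((he.comp (continuous_id.smul continuous_const)).mul continuous_const).mul
      (he.comp ((continuous_const.sub continuous_id).smul continuous_const))
  have hFTC : (∫ ν in (0:ℝ)..1, F' ν) = F 1 - F 0 :=
    intervalIntegral.integral_eq_sub_of_hasDerivAt (fun ν _ => hderiv ν)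
      (hF'cont.intervalIntegrable _ _)
  have hF1 : F 1 = NormedSpace.exp Y := by
    show NormedSpace.exp ((1:ℝ) • Y) * NormedSpace.exp ((1 - (1:ℝ)) • X) = _
    rw [one_smul, sub_self, zero_smul, NormedSpace.exp_zero, mul_one]
  have hF0 : F 0 = NormedSpace.exp X := by
    show NormedSpace.exp ((0:ℝ) • Y) * NormedSpace.exp ((1 - (0:ℝ)) • X) = _
    rw [zero_smul, NormedSpace.exp_zero, one_mul, sub_zero, one_smul]
  -- step 3 : bound the integrand
  set C : ℝ := γ * γ' * ((LA : ℝ) * s ^ 2 / (2 * N)) * Real.exp (min lam lam' * s) with hC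
  have hbound : ∀ ν ∈ Set.uIoc (0:ℝ) 1, ‖F' ν‖ ≤ C := by
    intro ν hν
    rw [Set.uIoc_of_le zero_le_one] at hν
    have hν' : ν ∈ Set.Icc (0:ℝ) 1 := ⟨hν.1.le, hν.2⟩
    have hν2 : (1 - ν) ∈ Set.Icc (0:ℝ) 1 := ⟨by linarith [hν'.2], by linarith [hν'.1]⟩
    have e1 : ν • Y = (-(ν * s)) • A t := by
      rw [hY, smul_smul]; ring_nf
    have e2 := h2 ν hν'
    rw [← e1] at e2
    have e3 := h1 (1 - ν) hν2
    have hnY : ‖NormedSpace.exp (ν • Y)‖ ≤ γ' * Real.exp (ν * lam' * s) := e2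
    have hnX : ‖NormedSpace.exp ((1 - ν) • X)‖ ≤ γ * Real.exp ((1 - ν) * lam * s) := e3
    have hsub : ‖F' ν‖ ≤ ‖NormedSpace.exp (ν • Y)‖ * ‖Y - X‖ *
        ‖NormedSpace.exp ((1 - ν) • X)‖ :=
      le_trans (norm_mul_le _ _) (by gcongr; exact norm_mul_le _ _)
    have hYX : ‖Y - X‖ ≤ (LA : ℝ) * s ^ 2 / (2 * N) := by
      rw [norm_sub_rev]; exact hD
    have hprod : ‖NormedSpace.exp (ν • Y)‖ * ‖Y - X‖ *
        ‖NormedSpace.exp ((1 - ν) • X)‖ ≤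
        (γ' * Real.exp (ν * lam' * s)) * ((LA : ℝ) * s ^ 2 / (2 * N)) *
          (γ * Real.exp ((1 - ν) * lam * s)) := by
      gcongr <;> positivity
    have hexp : Real.exp (ν * lam' * s) * Real.exp ((1 - ν) * lam * s) ≤
        Real.exp (min lam lam' * s) := by
      rw [← Real.exp_add]
      apply Real.exp_le_exp.mpr
      have hm1 : min lam lam' * s ≥ lam' * s := by
        apply mul_le_mul_of_nonpos_right (min_le_right _ _) hs.le
      have hm2 : min lam lam' * s ≥ lam * s := by
        apply mul_le_mul_of_nonpos_right (min_le_left _ _) hs.le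
      nlinarith [hν'.1, hν'.2]
    calc ‖F' ν‖ ≤ (γ' * Real.exp (ν * lam' * s)) * ((LA : ℝ) * s ^ 2 / (2 * N)) *
          (γ * Real.exp ((1 - ν) * lam * s)) := hsub.trans hprod
      _ = γ * γ' * ((LA : ℝ) * s ^ 2 / (2 * N)) *
          (Real.exp (ν * lam' * s) * Real.exp ((1 - ν) * lam * s)) := by ring
      _ ≤ C := by
          rw [hC]
          have hpos : (0:ℝ) ≤ γ * γ' * ((LA : ℝ) * s ^ 2 / (2 * N)) := by positivity
          exact mul_le_mul_of_nonneg_left hexp hpos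
  have hintC : ‖∫ ν in (0:ℝ)..1, F' ν‖ ≤ C * |1 - 0| :=
    intervalIntegral.norm_integral_le_of_norm_le_const hbound
  rw [hFTC, hF1, hF0] at hintC
  rw [norm_sub_rev] at hintC
  calc ‖NormedSpace.exp X - NormedSpace.exp Y‖ ≤ C * |1 - 0| := hintC
    _ = C := by norm_num
    _ = (LA : ℝ) * γ * γ' / (2 * (N : ℝ)) * s ^ 2 * Real.exp (min lam lam' * s) := by
        rw [hC]; field_simp
end
end

section
/- Let p ∈ ℕ, let A: ℝ → M_p(ℝ) be a Lipschitz continuous matrix-valued function with Lipschitz constant L_A (with respect to the spectral norm), let s < 0, and suppose there exist γ̃, λ̃ > 0 such that ‖exp(−ν·A(w)·s)‖ ≤ γ̃·e^{νλ̃s} for all ν ∈ [0,1] and all w ∈ ℝ. Then for all u, v ∈ ℝ: ‖exp(−A(u)·s) − exp(−A(v)·s)‖ ≤ L_A·γ̃²·|s|·e^{λ̃ s}·|u−v|. -/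
open scoped Matrix.Norms.L2Operator NNReal

noncomputable section

/-- Matrix exponential estimate from the proof of Corollary 5.7: if `A` is
Lipschitz (spectral norm) and `‖exp(-νA(w)s)‖ ≤ γ̃ e^{νλ̃s}` uniformly in
`w ∈ ℝ` and `ν ∈ [0,1]`, then
`‖exp(-A(u)s) - exp(-A(v)s)‖ ≤ L_A γ̃² |s| e^{λ̃ s} |u - v|`. -/
theorem matrix_exp_lipschitz_in_parameter
    (p : ℕ) (A : ℝ → Matrix (Fin p) (Fin p) ℝ)
    (LA : ℝ≥0) (hA : LipschitzWith LA A)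
    (s : ℝ) (hs : s < 0)
    (γ' lam' : ℝ) (hγ' : 0 < γ') (hlam' : 0 < lam')
    (hbound : ∀ (w : ℝ) (ν : ℝ), ν ∈ Set.Icc (0 : ℝ) 1 →
      ‖NormedSpace.exp ((-(ν * s)) • A w)‖ ≤ γ' * Real.exp (ν * lam' * s)) :
    ∀ u v : ℝ,
      ‖NormedSpace.exp ((-s) • A u) - NormedSpace.exp ((-s) • A v)‖ ≤
        (LA : ℝ) * γ' ^ 2 * |s| * Real.exp (lam' * s) * |u - v| := by
  intro u v
  set Bu : Matrix (Fin p) (Fin p) ℝ := (-s) • A u with hBu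
  set Bv : Matrix (Fin p) (Fin p) ℝ := (-s) • A v with hBv
  set f : ℝ → Matrix (Fin p) (Fin p) ℝ :=
    fun ν => NormedSpace.exp (ν • Bv) * NormedSpace.exp ((1 - ν) • Bu) with hf
  set g : ℝ → Matrix (Fin p) (Fin p) ℝ :=
    fun ν => NormedSpace.exp (ν • Bv) * ((Bv - Bu) * NormedSpace.exp ((1 - ν) • Bu))
    with hg
  set C : ℝ := (LA : ℝ) * γ' ^ 2 * |s| * Real.exp (lam' * s) * |u - v| with hC
  have hderiv : ∀ ν ∈ Set.Icc (0 : ℝ) 1, HasDerivWithinAt f (g ν) (Set.Icc (0:ℝ) 1) ν := by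
    intro ν _
    have h1 : HasDerivAt (fun ν : ℝ => NormedSpace.exp (ν • Bv))
        (NormedSpace.exp (ν • Bv) * Bv) ν := hasDerivAt_exp_smul_const Bv ν
    have hlin : HasDerivAt (fun ν : ℝ => 1 - ν) (-1 : ℝ) ν := by
      simpa using (hasDerivAt_id ν).const_sub 1
    have h2 : HasDerivAt (fun ν : ℝ => NormedSpace.exp ((1 - ν) • Bu))
        ((-1 : ℝ) • (Bu * NormedSpace.exp ((1 - ν) • Bu))) ν :=
      (hasDerivAt_exp_smul_const' Bu (1 - ν)).scomp ν hlin
    have h3 := h1.mul h2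
    have heq : NormedSpace.exp (ν • Bv) * Bv * NormedSpace.exp ((1 - ν) • Bu)
        + NormedSpace.exp (ν • Bv) * ((-1 : ℝ) • (Bu * NormedSpace.exp ((1 - ν) • Bu)))
        = g ν := by
      simp only [hg, neg_one_smul]
      noncomm_ring
    rw [heq] at h3
    exact h3.hasDerivWithinAt
  have hgbound : ∀ ν ∈ Set.Icc (0 : ℝ) 1, ‖g ν‖ ≤ C := by
    intro ν hν
    have hν' : (1 - ν) ∈ Set.Icc (0 : ℝ) 1 := by
      constructor <;> [linarith [hν.2]; linarith [hν.1]]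
    have e1 : ν • Bv = (-(ν * s)) • A v := by
      rw [hBv, smul_smul]; congr 1; ring
    have e2 : (1 - ν) • Bu = (-((1 - ν) * s)) • A u := by
      rw [hBu, smul_smul]; congr 1; ring
    have a1 : ‖NormedSpace.exp (ν • Bv)‖ ≤ γ' * Real.exp (ν * lam' * s) := by
      rw [e1]; exact hbound v ν hν
    have a2 : ‖NormedSpace.exp ((1 - ν) • Bu)‖ ≤ γ' * Real.exp ((1 - ν) * lam' * s) := by
      rw [e2]; exact hbound u (1 - ν) hν'
    have a3 : ‖Bv - Bu‖ ≤ |s| * ((LA : ℝ) * |v - u|) := by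
      have : Bv - Bu = (-s) • (A v - A u) := by rw [hBu, hBv, smul_sub]
      rw [this, norm_smul, Real.norm_eq_abs, abs_neg]
      have := hA.dist_le_mul v u
      rw [dist_eq_norm, Real.dist_eq] at this
      exact mul_le_mul_of_nonneg_left this (abs_nonneg s)
    calc ‖g ν‖ ≤ ‖NormedSpace.exp (ν • Bv)‖ *
          (‖Bv - Bu‖ * ‖NormedSpace.exp ((1 - ν) • Bu)‖) := by
            refine (norm_mul_le _ _).trans ?_
            gcongr
            exact norm_mul_le _ _
      _ ≤ (γ' * Real.exp (ν * lam' * s)) *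
          ((|s| * ((LA : ℝ) * |v - u|)) * (γ' * Real.exp ((1 - ν) * lam' * s))) := by
            gcongr <;> positivity
      _ = (LA : ℝ) * γ' ^ 2 * |s| * (Real.exp (ν * lam' * s) *
            Real.exp ((1 - ν) * lam' * s)) * |v - u| := by ring
      _ = C := by
            rw [← Real.exp_add, hC, abs_sub_comm v u]
            ring_nf
  have hconv : Convex ℝ (Set.Icc (0 : ℝ) 1) := convex_Icc 0 1
  have key := hconv.norm_image_sub_le_of_norm_hasDerivWithin_le hderiv hgbound
    (Set.right_mem_Icc.2 zero_le_one) (Set.left_mem_Icc.2 zero_le_one)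
  have hf0 : f 0 = NormedSpace.exp Bu := by
    simp [hf, NormedSpace.exp_zero]
  have hf1 : f 1 = NormedSpace.exp Bv := by
    simp [hf, NormedSpace.exp_zero]
  rw [hf0, hf1] at key
  simpa using key
end
end
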